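/- arXiv:1201.5993 — 9 statements merged into one kernel-verified Lean document; each statement's English description precedes it below -/
import Mathlib

section
/- Let H be a real Hilbert space and let (f_i)_{i∈ℕ} be a frame for H with bounds A, B > 0. Let (g_i)_{i∈ℕ} be a sequence in H and let λ₁, λ₂, μ ≥ 0 satisfy λ₂ < 1 and λ₁ + μ/√A < 1. Assume that for every finite set F ⊆ ℕ and every choice of scalars c : ℕ → ℝ one has ‖∑_{i∈F} c_i (f_i − g_i)‖ ≤ λ₁ ‖∑_{i∈F} c_i f_i‖ + λ₂ ‖∑_{i∈F} c_i g_i‖ + μ (∑_{i∈F} c_i²)^{1/2}. Then (g_i)_{i∈ℕ} is a frame for H with bounds A·(1 − (λ₁ + λ₂ + μ/√A)/(1 + λ₂))² and B·(1 + (λ₁ + λ₂ + μ/√B)/(1 − λ₂))²; that is, for every x ∈ H the family (⟨x, g_i⟩²)_{i∈ℕ} is summable and A·(1 − (λ₁ + λ₂ + μ/√A)/(1 + λ₂))²·‖x‖² ≤ ∑_{i=1}^∞ ⟨x, g_i⟩² ≤ B·(1 + (λ₁ + λ₂ + μ/√B)/(1 − λ₂))²·‖x‖². -/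
open scoped RealInnerProductSpace

set_option maxHeartbeats 1000000

open Filter Topology

set_option maxHeartbeats 1000000

section Helpers
variable {H : Type*} [NormedAddCommGroup H] [InnerProductSpace ℝ H] [CompleteSpace H]

/-- Upper frame (Bessel) bound implies finite synthesis bound. -/
lemma synth_of_bessel {f : ℕ → H} {Bf : ℝ} (hBf : 0 ≤ Bf)
    (hb : ∀ x : H, Summable (fun i => ⟪x, f i⟫ ^ 2) ∧ (∑' i, ⟪x, f i⟫ ^ 2) ≤ Bf * ‖x‖ ^ 2)
    (F : Finset ℕ) (c : ℕ → ℝ) :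
    ‖∑ i ∈ F, c i • f i‖ ≤ Real.sqrt Bf * Real.sqrt (∑ i ∈ F, c i ^ 2) := by
  set y := ∑ i ∈ F, c i • f i with hy
  have h1 : ‖y‖ ^ 2 = ∑ i ∈ F, c i * ⟪y, f i⟫ := by
    rw [← real_inner_self_eq_norm_sq, hy, sum_inner]
    simp [real_inner_smul_left, real_inner_comm]
  have h2 : ∑ i ∈ F, c i * ⟪y, f i⟫ ≤
      Real.sqrt (∑ i ∈ F, c i ^ 2) * Real.sqrt (∑ i ∈ F, ⟪y, f i⟫ ^ 2) :=
    Real.sum_mul_le_sqrt_mul_sqrt _ _ _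
  have h3 : ∑ i ∈ F, ⟪y, f i⟫ ^ 2 ≤ Bf * ‖y‖ ^ 2 :=
    le_trans (Summable.sum_le_tsum F (fun i _ => sq_nonneg _) (hb y).1) (hb y).2
  have h4 : Real.sqrt (∑ i ∈ F, ⟪y, f i⟫ ^ 2) ≤ Real.sqrt Bf * ‖y‖ := by
    rw [← Real.sqrt_sq (norm_nonneg y), ← Real.sqrt_mul hBf]
    exact Real.sqrt_le_sqrt (by simpa [Real.sq_sqrt (norm_nonneg y), sq] using h3)
  have h5 : ‖y‖ ^ 2 ≤ Real.sqrt (∑ i ∈ F, c i ^ 2) * (Real.sqrt Bf * ‖y‖) := by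
    calc ‖y‖ ^ 2 = ∑ i ∈ F, c i * ⟪y, f i⟫ := h1
      _ ≤ Real.sqrt (∑ i ∈ F, c i ^ 2) * Real.sqrt (∑ i ∈ F, ⟪y, f i⟫ ^ 2) := h2
      _ ≤ Real.sqrt (∑ i ∈ F, c i ^ 2) * (Real.sqrt Bf * ‖y‖) := by
          exact mul_le_mul_of_nonneg_left h4 (Real.sqrt_nonneg _)
  rcases eq_or_lt_of_le (norm_nonneg y) with h | h
  · rw [← h]; positivity
  · have := (mul_le_mul_iff_left₀ h).mp (by nlinarith [h5] : ‖y‖ * ‖y‖ ≤ (Real.sqrt Bf * Real.sqrt (∑ i ∈ F, c i ^ 2)) * ‖y‖)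
    exact this

/-- Finite synthesis bound implies Bessel bound. -/
lemma bessel_of_synth {g : ℕ → H} {C : ℝ} (hC : 0 ≤ C)
    (hsyn : ∀ (F : Finset ℕ) (c : ℕ → ℝ),
      ‖∑ i ∈ F, c i • g i‖ ≤ C * Real.sqrt (∑ i ∈ F, c i ^ 2)) (x : H) :
    Summable (fun i => ⟪x, g i⟫ ^ 2) ∧ (∑' i, ⟪x, g i⟫ ^ 2) ≤ C ^ 2 * ‖x‖ ^ 2 := by
  have key : ∀ F : Finset ℕ, ∑ i ∈ F, ⟪x, g i⟫ ^ 2 ≤ C ^ 2 * ‖x‖ ^ 2 := by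
    intro F
    set S := ∑ i ∈ F, ⟪x, g i⟫ ^ 2 with hSdef
    have hS0 : 0 ≤ S := Finset.sum_nonneg fun i _ => sq_nonneg _
    have h1 : S = ⟪x, ∑ i ∈ F, ⟪x, g i⟫ • g i⟫ := by
      rw [inner_sum]; simp only [real_inner_smul_right]; exact Finset.sum_congr rfl fun i _ => (sq _)
    have h2 : S ≤ ‖x‖ * (C * Real.sqrt S) := by
      calc S = ⟪x, ∑ i ∈ F, ⟪x, g i⟫ • g i⟫ := h1
        _ ≤ ‖x‖ * ‖∑ i ∈ F, ⟪x, g i⟫ • g i‖ := real_inner_le_norm _ _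
        _ ≤ ‖x‖ * (C * Real.sqrt S) := by
            exact mul_le_mul_of_nonneg_left (hsyn F _) (norm_nonneg x)
    nlinarith [Real.sq_sqrt hS0, Real.sqrt_nonneg S, norm_nonneg x,
      sq_nonneg (Real.sqrt S - C * ‖x‖)]
  have hsum : Summable (fun i => ⟪x, g i⟫ ^ 2) :=
    summable_of_sum_le (fun i => sq_nonneg _) key
  exact ⟨hsum, Summable.tsum_le_of_sum_le hsum key⟩

end Helpers

section Helpers2
variable {H : Type*} [NormedAddCommGroup H] [InnerProductSpace ℝ H] [CompleteSpace H]

lemma summable_smul_of_synth {g : ℕ → H} {C : ℝ} (hC : 0 ≤ C)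
    (hsyn : ∀ (F : Finset ℕ) (c : ℕ → ℝ),
      ‖∑ i ∈ F, c i • g i‖ ≤ C * Real.sqrt (∑ i ∈ F, c i ^ 2))
    {c : ℕ → ℝ} (hc : Summable (fun i => c i ^ 2)) :
    Summable (fun i => c i • g i) := by
  rw [summable_iff_vanishing_norm]
  intro ε hε
  have hδ : (0:ℝ) < (ε / (C + 1)) ^ 2 := by positivity
  obtain ⟨s, hs⟩ := summable_iff_vanishing_norm.1 hc _ hδ
  refine ⟨s, fun t ht => ?_⟩
  have h1 : ∑ i ∈ t, c i ^ 2 < (ε / (C + 1)) ^ 2 := by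
    have := hs t ht
    rwa [Real.norm_eq_abs, abs_of_nonneg (Finset.sum_nonneg fun i _ => sq_nonneg _)] at this
  have h2 : Real.sqrt (∑ i ∈ t, c i ^ 2) < ε / (C + 1) := by
    have := Real.sqrt_lt_sqrt (Finset.sum_nonneg fun i _ => sq_nonneg _) h1
    rwa [Real.sqrt_sq (by positivity)] at this
  have h3 : Real.sqrt (∑ i ∈ t, c i ^ 2) * (C + 1) < ε :=
    (lt_div_iff₀ (by linarith : (0:ℝ) < C + 1)).mp h2
  calc ‖∑ i ∈ t, c i • g i‖ ≤ C * Real.sqrt (∑ i ∈ t, c i ^ 2) := hsyn t c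
    _ < ε := by nlinarith [Real.sqrt_nonneg (∑ i ∈ t, c i ^ 2)]

lemma norm_tsum_smul_le {g : ℕ → H} {C : ℝ} (hC : 0 ≤ C)
    (hsyn : ∀ (F : Finset ℕ) (c : ℕ → ℝ),
      ‖∑ i ∈ F, c i • g i‖ ≤ C * Real.sqrt (∑ i ∈ F, c i ^ 2))
    {c : ℕ → ℝ} (hc : Summable (fun i => c i ^ 2)) :
    ‖∑' i, c i • g i‖ ≤ C * Real.sqrt (∑' i, c i ^ 2) := by
  have hsum := (summable_smul_of_synth hC hsyn hc).hasSum
  have htend : Tendsto (fun F : Finset ℕ => ‖∑ i ∈ F, c i • g i‖) atTop (𝓝 ‖∑' i, c i • g i‖) :=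
    (continuous_norm.tendsto _).comp hsum
  refine le_of_tendsto htend (Filter.Eventually.of_forall fun F => ?_)
  calc ‖∑ i ∈ F, c i • g i‖ ≤ C * Real.sqrt (∑ i ∈ F, c i ^ 2) := hsyn F c
    _ ≤ C * Real.sqrt (∑' i, c i ^ 2) := by
        exact mul_le_mul_of_nonneg_left
          (Real.sqrt_le_sqrt (Summable.sum_le_tsum F (fun i _ => sq_nonneg _) hc)) hC

/-- ℓ² Cauchy–Schwarz for tsums. -/
lemma tsum_mul_le_sqrt_mul_sqrt {c d : ℕ → ℝ} (hc : Summable (fun i => c i ^ 2))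
    (hd : Summable (fun i => d i ^ 2)) :
    ∑' i, c i * d i ≤ Real.sqrt (∑' i, c i ^ 2) * Real.sqrt (∑' i, d i ^ 2) := by
  have habs : Summable (fun i => |c i| * |d i|) := by
    refine Summable.of_nonneg_of_le (fun i => by positivity)
      (fun i => ?_) ((hc.add hd).mul_left (1/2 : ℝ))
    have := sq_nonneg (|c i| - |d i|)
    simp only [one_div]
    nlinarith [sq_abs (c i), sq_abs (d i)]
  have hcd : Summable (fun i => c i * d i) := by
    refine habs.of_norm_bounded (fun i => ?_)
    rw [Real.norm_eq_abs, abs_mul]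
  have h1 : ∑' i, c i * d i ≤ ∑' i, |c i| * |d i| :=
    Summable.tsum_le_tsum (fun i => by rw [← abs_mul]; exact le_abs_self _) hcd habs
  have h2 : ∑' i, |c i| * |d i| ≤ Real.sqrt (∑' i, c i ^ 2) * Real.sqrt (∑' i, d i ^ 2) := by
    refine Summable.tsum_le_of_sum_le habs (fun F => ?_)
    calc ∑ i ∈ F, |c i| * |d i|
        ≤ Real.sqrt (∑ i ∈ F, |c i| ^ 2) * Real.sqrt (∑ i ∈ F, |d i| ^ 2) :=
          Real.sum_mul_le_sqrt_mul_sqrt _ _ _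
      _ = Real.sqrt (∑ i ∈ F, c i ^ 2) * Real.sqrt (∑ i ∈ F, d i ^ 2) := by
          simp [sq_abs]
      _ ≤ Real.sqrt (∑' i, c i ^ 2) * Real.sqrt (∑' i, d i ^ 2) := by
          gcongr <;> [exact Summable.sum_le_tsum F (fun i _ => sq_nonneg _) hc;
            exact Summable.sum_le_tsum F (fun i _ => sq_nonneg _) hd]
  linarith

end Helpers2

section Helpers3
variable {H : Type*} [NormedAddCommGroup H] [InnerProductSpace ℝ H] [CompleteSpace H]

lemma inner_tsum_smul {g : ℕ → H} {c : ℕ → ℝ} (hsum : Summable (fun i => c i • g i)) (y : H) :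
    ⟪y, ∑' i, c i • g i⟫ = ∑' i, c i * ⟪y, g i⟫ := by
  have := ContinuousLinearMap.map_tsum (innerSL ℝ y) hsum
  simpa [real_inner_smul_right] using this

lemma exists_uop {f g : ℕ → H} {Bf Cg : ℝ} (hBf : 0 ≤ Bf) (hCg : 0 ≤ Cg)
    (hb : ∀ x : H, Summable (fun i => ⟪x, f i⟫ ^ 2) ∧ (∑' i, ⟪x, f i⟫ ^ 2) ≤ Bf * ‖x‖ ^ 2)
    (hsyn : ∀ (F : Finset ℕ) (c : ℕ → ℝ),
      ‖∑ i ∈ F, c i • g i‖ ≤ Cg * Real.sqrt (∑ i ∈ F, c i ^ 2))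
    (V : H →L[ℝ] H) :
    ∃ U : H →L[ℝ] H, ∀ x, U x = ∑' i, ⟪V x, f i⟫ • g i := by
  have hsm : ∀ x : H, Summable (fun i => ⟪V x, f i⟫ • g i) := fun x =>
    summable_smul_of_synth hCg hsyn (hb (V x)).1
  have hbound : ∀ x : H, ‖∑' i, ⟪V x, f i⟫ • g i‖ ≤ Cg * Real.sqrt Bf * ‖V‖ * ‖x‖ := by
    intro x
    have h1 := norm_tsum_smul_le hCg hsyn (hb (V x)).1
    have h2 : Real.sqrt (∑' i, ⟪V x, f i⟫ ^ 2) ≤ Real.sqrt Bf * ‖V x‖ := by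
      rw [← Real.sqrt_sq (norm_nonneg (V x)), ← Real.sqrt_mul hBf]
      exact Real.sqrt_le_sqrt (hb (V x)).2
    calc ‖∑' i, ⟪V x, f i⟫ • g i‖ ≤ Cg * Real.sqrt (∑' i, ⟪V x, f i⟫ ^ 2) := h1
      _ ≤ Cg * (Real.sqrt Bf * ‖V x‖) := mul_le_mul_of_nonneg_left h2 hCg
      _ ≤ Cg * (Real.sqrt Bf * (‖V‖ * ‖x‖)) := by
          have := V.le_opNorm x
          gcongr
      _ = Cg * Real.sqrt Bf * ‖V‖ * ‖x‖ := by ring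
  refine ⟨LinearMap.mkContinuous
    { toFun := fun x => ∑' i, ⟪V x, f i⟫ • g i
      map_add' := ?_
      map_smul' := ?_ } (Cg * Real.sqrt Bf * ‖V‖) ?_, fun x => rfl⟩
  · intro x y
    rw [← Summable.tsum_add (hsm x) (hsm y)]
    refine tsum_congr fun i => ?_
    rw [map_add, inner_add_left, add_smul]
  · intro r x
    rw [RingHom.id_apply, ← tsum_const_smul'' r]
    refine tsum_congr fun i => ?_
    rw [map_smul, real_inner_smul_left, smul_smul]
  · exact hbound

end Helpers3

section FrameOp
variable {H : Type*} [NormedAddCommGroup H] [InnerProductSpace ℝ H] [CompleteSpace H]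

lemma exists_dual {f : ℕ → H} {A B : ℝ} (hA : 0 < A) (hB : 0 < B)
    (hframe : ∀ x : H, Summable (fun i => ⟪x, f i⟫ ^ 2) ∧
      A * ‖x‖ ^ 2 ≤ ∑' i, ⟪x, f i⟫ ^ 2 ∧ (∑' i, ⟪x, f i⟫ ^ 2) ≤ B * ‖x‖ ^ 2) :
    ∃ V : H →L[ℝ] H, (∀ x : H, HasSum (fun i => ⟪V x, f i⟫ • f i) x) ∧
      (∀ x : H, ∑' i, ⟪V x, f i⟫ ^ 2 ≤ ‖x‖ ^ 2 / A) := by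
  have hb : ∀ x : H, Summable (fun i => ⟪x, f i⟫ ^ 2) ∧ (∑' i, ⟪x, f i⟫ ^ 2) ≤ B * ‖x‖ ^ 2 :=
    fun x => ⟨(hframe x).1, (hframe x).2.2⟩
  have hsynf := synth_of_bessel hB.le hb
  obtain ⟨S, hS⟩ := exists_uop hB.le (Real.sqrt_nonneg B) hb hsynf 1
  have hsmS : ∀ x : H, Summable (fun i => ⟪x, f i⟫ • f i) := fun x =>
    summable_smul_of_synth (Real.sqrt_nonneg B) hsynf (hframe x).1
  have hSapp : ∀ x : H, S x = ∑' i, ⟪x, f i⟫ • f i := by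
    intro x; rw [hS x]; simp
  have hself : ∀ x : H, ⟪x, S x⟫ = ∑' i, ⟪x, f i⟫ ^ 2 := by
    intro x
    rw [hSapp x, inner_tsum_smul (hsmS x) x]
    exact tsum_congr fun i => (sq _).symm
  have hlow : ∀ x : H, A * ‖x‖ ≤ ‖S x‖ := by
    intro x
    rcases eq_or_lt_of_le (norm_nonneg x) with h | h
    · simp [← h]
    · have h1 : A * ‖x‖ ^ 2 ≤ ⟪x, S x⟫ := (hself x) ▸ (hframe x).2.1
      have h2 : ⟪x, S x⟫ ≤ ‖x‖ * ‖S x‖ := real_inner_le_norm _ _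
      have := h1.trans h2
      rw [sq] at this
      nlinarith
  have hinj : S.ker = ⊥ := by
    refine LinearMap.ker_eq_bot'.mpr fun x hx => ?_
    have := hlow x
    rw [show S x = 0 from hx, norm_zero] at this
    have : ‖x‖ = 0 := le_antisymm (by nlinarith) (norm_nonneg x)
    simpa using this
  have hanti : AntilipschitzWith ⟨A⁻¹, by positivity⟩ S := by
    refine S.antilipschitz_of_bound fun x => ?_
    have := hlow x
    change ‖x‖ ≤ A⁻¹ * ‖S x‖
    rw [inv_mul_eq_div, le_div_iff₀ hA]
    linarith
  have hclosed : IsClosed (S.range : Set H) := by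
    have : (S.range : Set H) = Set.range S := by
      ext y; simp [LinearMap.mem_range]
    rw [this]
    exact hanti.isClosed_range S.uniformContinuous
  have : CompleteSpace S.range := hclosed.completeSpace_coe
  have hsurj : S.range = ⊤ := by
    rw [← Submodule.orthogonal_eq_bot_iff]
    refine (Submodule.eq_bot_iff _).mpr fun y hy => ?_
    have h0 : ⟪y, S y⟫ = 0 := by
      have := hy (S y) (LinearMap.mem_range_self _ y)
      rwa [real_inner_comm]
    have h1 : A * ‖y‖ ^ 2 ≤ 0 := by
      have h2 := (hframe y).2.1
      rw [← hself y, h0] at h2; exact h2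
    have h2 : ‖y‖ ^ 2 = 0 := le_antisymm (by nlinarith) (sq_nonneg _)
    have h3 : ‖y‖ = 0 := by simpa using pow_eq_zero_iff two_ne_zero |>.mp h2
    simpa using h3
  set e := ContinuousLinearEquiv.ofBijective S hinj hsurj with he
  refine ⟨(e.symm : H →L[ℝ] H), fun x => ?_, fun x => ?_⟩
  · have hx : S (e.symm x) = x := by
      have := ContinuousLinearEquiv.ofBijective_apply_symm_apply S hinj hsurj x
      exact this
    have := (hsmS (e.symm x)).hasSum
    rw [← hSapp, hx] at this
    simpa using this
  · have hx : S (e.symm x) = x := ContinuousLinearEquiv.ofBijective_apply_symm_apply S hinj hsurj x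
    have h1 : ∑' i, ⟪e.symm x, f i⟫ ^ 2 = ⟪e.symm x, x⟫ := by
      rw [← hself (e.symm x), hx]
    have h2 : ‖(e.symm x : H)‖ ≤ ‖x‖ / A := by
      have := hlow (e.symm x)
      rw [hx] at this
      rw [le_div_iff₀ hA]; linarith
    have h3 : ⟪(e.symm x : H), x⟫ ≤ ‖(e.symm x : H)‖ * ‖x‖ := real_inner_le_norm _ _
    have h4 : ‖(e.symm x : H)‖ * ‖x‖ ≤ ‖x‖ / A * ‖x‖ :=
      mul_le_mul_of_nonneg_right h2 (norm_nonneg x)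
    simp only [ContinuousLinearEquiv.coe_coe]
    calc ∑' i, ⟪e.symm x, f i⟫ ^ 2 = ⟪(e.symm x : H), x⟫ := h1
      _ ≤ ‖x‖ / A * ‖x‖ := h3.trans h4
      _ = ‖x‖ ^ 2 / A := by ring

end FrameOp

section Surj
variable {H : Type*} [NormedAddCommGroup H] [InnerProductSpace ℝ H] [CompleteSpace H]

lemma surjective_of_pert (U : H →L[ℝ] H) (l1 l2 : ℝ) (h1 : 0 ≤ l1) (h2 : 0 ≤ l2)
    (h1' : l1 < 1) (h2' : l2 < 1)
    (hin : ∀ x : H, ‖x - U x‖ ≤ l1 * ‖x‖ + l2 * ‖U x‖) :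
    Function.Surjective U := by
  set m : ℝ := min (1 - l1) (1 - l2) with hm
  have hm0 : 0 < m := lt_min (by linarith) (by linarith)
  set c : ℝ := m / (1 + l2) with hc
  have hc0 : 0 < c := div_pos hm0 (by linarith)
  set Φ : ℝ → (H →L[ℝ] H) := fun t => (1 - t) • (1 : H →L[ℝ] H) + t • U with hΦ
  have hΦapp : ∀ t (x : H), Φ t x = x - t • (x - U x) := by
    intro t x
    show ((1 - t) • (1 : H →L[ℝ] H) + t • U) x = _
    rw [ContinuousLinearMap.add_apply, ContinuousLinearMap.smul_apply,
      ContinuousLinearMap.smul_apply, ContinuousLinearMap.one_apply, smul_sub, sub_smul, one_smul]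
    abel
  have hlowt : ∀ t ∈ Set.Icc (0:ℝ) 1, ∀ x : H, c * ‖x‖ ≤ ‖Φ t x‖ := by
    rintro t ⟨ht0, ht1⟩ x
    set a := ‖x‖
    set b := ‖U x‖
    set d := ‖x - U x‖
    set e := ‖Φ t x‖
    have ha : 0 ≤ a := norm_nonneg _
    have hb : 0 ≤ b := norm_nonneg _
    have hd : 0 ≤ d := norm_nonneg _
    have he : 0 ≤ e := norm_nonneg _
    have f1 : d ≤ l1 * a + l2 * b := hin x
    have f2 : b ≤ e + (1 - t) * d := by
      have hid : U x = Φ t x + (1 - t) • (U x - x) := by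
        simp only [hΦapp, smul_sub, sub_smul, one_smul]; abel
      calc b = ‖Φ t x + (1 - t) • (U x - x)‖ := by rw [← hid]
        _ ≤ e + ‖(1 - t) • (U x - x)‖ := norm_add_le _ _
        _ = e + (1 - t) * d := by
            rw [norm_smul, Real.norm_eq_abs, abs_of_nonneg (by linarith), norm_sub_rev]
    have f3 : a - t * d ≤ e := by
      have hid : x = Φ t x + t • (x - U x) := by simp only [hΦapp]; abel
      have : a ≤ e + t * d := by
        calc a = ‖Φ t x + t • (x - U x)‖ := by rw [← hid]
          _ ≤ e + ‖t • (x - U x)‖ := norm_add_le _ _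
          _ = e + t * d := by rw [norm_smul, Real.norm_eq_abs, abs_of_nonneg ht0]
      linarith
    have hD : 0 < 1 - l2 * (1 - t) := by nlinarith
    have hd1 : (1 - l2 * (1 - t)) * d ≤ l1 * a + l2 * e := by
      nlinarith [mul_le_mul_of_nonneg_left f2 h2]
    have hda : (1 - l2 * (1 - t) - t * l1) * a ≤ (1 - l2 * (1 - t) + t * l2) * e := by
      nlinarith [mul_le_mul_of_nonneg_left f3 hD.le, mul_le_mul_of_nonneg_left hd1 ht0]
    have hm1 : m ≤ 1 - l2 * (1 - t) - t * l1 := by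
      have := min_le_left (1 - l1) (1 - l2)
      have := min_le_right (1 - l1) (1 - l2)
      nlinarith
    have hm2 : 1 - l2 * (1 - t) + t * l2 ≤ 1 + l2 := by nlinarith
    have key : m * a ≤ (1 + l2) * e := by nlinarith
    rw [hc, div_mul_eq_mul_div, div_le_iff₀ (by linarith : (0:ℝ) < 1 + l2)]
    nlinarith
  have hanti : ∀ t ∈ Set.Icc (0:ℝ) 1,
      AntilipschitzWith ⟨c⁻¹, by positivity⟩ (Φ t) := by
    intro t ht
    refine (Φ t).antilipschitz_of_bound fun x => ?_
    have := hlowt t ht x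
    change ‖x‖ ≤ c⁻¹ * ‖Φ t x‖
    rw [inv_mul_eq_div, le_div_iff₀ hc0]
    linarith
  have hΦcont : Continuous Φ := by
    apply Continuous.add
    · exact (continuous_const.sub continuous_id).smul continuous_const
    · exact continuous_id.smul continuous_const
  have hopen : IsOpen {t : ℝ | IsUnit (Φ t)} :=
    (Units.isOpen).preimage hΦcont
  set T' : Set ℝ := Set.Icc (0:ℝ) 1 ∩ {t : ℝ | IsUnit (Φ t)} with hT'
  have h0T : (0:ℝ) ∈ T' := by
    constructor
    · exact ⟨le_refl 0, by norm_num⟩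
    · show IsUnit (Φ 0)
      have : Φ 0 = 1 := by simp [hΦ]
      rw [this]; exact isUnit_one
  have hbdd : BddAbove T' := ⟨1, fun t ht => ht.1.2⟩
  set τ := sSup T' with hτ
  have hτIcc : τ ∈ Set.Icc (0:ℝ) 1 :=
    ⟨le_csSup hbdd h0T, csSup_le ⟨0, h0T⟩ fun t ht => ht.1.2⟩
  have hτcl : τ ∈ closure T' := csSup_mem_closure ⟨0, h0T⟩ hbdd
  -- Φ τ is a unit
  have hunit_of : ∀ t ∈ Set.Icc (0:ℝ) 1, Function.Surjective (Φ t) → IsUnit (Φ t) := by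
    intro t ht hsurj
    have hker : (Φ t).ker = ⊥ := by
      refine LinearMap.ker_eq_bot'.mpr fun x hx => ?_
      have := hlowt t ht x
      rw [show Φ t x = 0 from hx, norm_zero] at this
      have : ‖x‖ = 0 := le_antisymm (by nlinarith) (norm_nonneg x)
      simpa using this
    have hrange : (Φ t).range = ⊤ := LinearMap.range_eq_top.mpr hsurj
    set e := ContinuousLinearEquiv.ofBijective (Φ t) hker hrange with he
    refine ⟨⟨Φ t, (e.symm : H →L[ℝ] H), ?_, ?_⟩, rfl⟩
    · ext y
      simp only [ContinuousLinearMap.mul_apply, ContinuousLinearMap.one_apply,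
        ContinuousLinearEquiv.coe_coe]
      exact ContinuousLinearEquiv.ofBijective_apply_symm_apply (Φ t) hker hrange y
    · ext y
      simp only [ContinuousLinearMap.mul_apply, ContinuousLinearMap.one_apply,
        ContinuousLinearEquiv.coe_coe]
      exact ContinuousLinearEquiv.ofBijective_symm_apply_apply (Φ t) hker hrange y
  have hτunit : IsUnit (Φ τ) := by
    apply hunit_of τ hτIcc
    have hclosed : IsClosed (Set.range (Φ τ)) :=
      (hanti τ hτIcc).isClosed_range (Φ τ).uniformContinuous
    have hdense : ∀ y : H, y ∈ closure (Set.range (Φ τ)) := by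
      intro y
      rw [Metric.mem_closure_iff]
      intro ε hε
      set K := ‖(1 : H →L[ℝ] H) - U‖ with hK
      have hK0 : 0 ≤ K := norm_nonneg _
      set δ := ε / ((K + 1) * (c⁻¹ * ‖y‖ + 1)) with hδ
      have hδ0 : 0 < δ := by
        apply div_pos hε
        have : 0 < c⁻¹ * ‖y‖ + 1 := by positivity
        nlinarith
      obtain ⟨t, htT, htd⟩ := Metric.mem_closure_iff.mp hτcl δ hδ0
      obtain ⟨u, hu⟩ := htT.2
      set z := (↑u⁻¹ : H →L[ℝ] H) y with hz
      have hΦtz : Φ t z = y := by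
        have h1 : (↑u * ↑u⁻¹ : H →L[ℝ] H) = 1 := u.mul_inv
        have := congrFun (congrArg (fun M : H →L[ℝ] H => (M : H → H)) h1) y
        simpa [ContinuousLinearMap.mul_apply, hu, hz] using this
      have hzn : ‖z‖ ≤ c⁻¹ * ‖y‖ := by
        have := hlowt t htT.1 z
        rw [hΦtz] at this
        rw [inv_mul_eq_div, le_div_iff₀ hc0]
        linarith
      refine ⟨Φ τ z, Set.mem_range_self z, ?_⟩
      have hdiff : Φ t z - Φ τ z = (τ - t) • ((1 : H →L[ℝ] H) - U) z := by
        simp only [hΦapp, ContinuousLinearMap.sub_apply, ContinuousLinearMap.one_apply,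
          sub_smul]
        abel
      have hnd : dist y (Φ τ z) = ‖(τ - t) • ((1 : H →L[ℝ] H) - U) z‖ := by
        rw [dist_eq_norm, ← hΦtz, hdiff]
      rw [hnd, norm_smul, Real.norm_eq_abs]
      have hb1 : ‖((1 : H →L[ℝ] H) - U) z‖ ≤ K * ‖z‖ :=
        ((1 : H →L[ℝ] H) - U).le_opNorm z
      have habs : |τ - t| < δ := by
        have := htd
        rwa [Real.dist_eq] at this
      have hδε : δ * ((K + 1) * (c⁻¹ * ‖y‖ + 1)) = ε := by
        rw [hδ]
        field_simp
      calc |τ - t| * ‖((1 : H →L[ℝ] H) - U) z‖ ≤ |τ - t| * (K * ‖z‖) := by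
            exact mul_le_mul_of_nonneg_left hb1 (abs_nonneg _)
        _ ≤ |τ - t| * (K * (c⁻¹ * ‖y‖)) := by
            have : K * ‖z‖ ≤ K * (c⁻¹ * ‖y‖) := mul_le_mul_of_nonneg_left hzn hK0
            exact mul_le_mul_of_nonneg_left this (abs_nonneg _)
        _ < δ * ((K + 1) * (c⁻¹ * ‖y‖ + 1)) := by
            have h1 : K * (c⁻¹ * ‖y‖) < (K + 1) * (c⁻¹ * ‖y‖ + 1) := by
              have : 0 ≤ c⁻¹ * ‖y‖ := by positivity
              nlinarith
            have h2 : 0 ≤ |τ - t| := abs_nonneg _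
            calc |τ - t| * (K * (c⁻¹ * ‖y‖)) ≤ |τ - t| * ((K + 1) * (c⁻¹ * ‖y‖ + 1)) :=
                  mul_le_mul_of_nonneg_left h1.le h2
              _ < δ * ((K + 1) * (c⁻¹ * ‖y‖ + 1)) := by
                  apply mul_lt_mul_of_pos_right habs
                  have : 0 ≤ c⁻¹ * ‖y‖ := by positivity
                  nlinarith
        _ = ε := hδε
    intro y
    have := hdense y
    rw [hclosed.closure_eq] at this
    exact this
  have hτ1 : τ = 1 := by
    by_contra hne
    have hτlt : τ < 1 := lt_of_le_of_ne hτIcc.2 hne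
    obtain ⟨δ, hδ0, hball⟩ := Metric.isOpen_iff.mp hopen τ hτunit
    set t := min 1 (τ + δ / 2) with ht
    have htτ : τ < t := by
      rcases le_or_gt 1 (τ + δ / 2) with h | h
      · rw [ht, min_eq_left h]; exact hτlt
      · rw [ht, min_eq_right h.le]; linarith
    have htT' : t ∈ T' := by
      constructor
      · exact ⟨le_trans hτIcc.1 htτ.le, min_le_left _ _⟩
      · apply hball
        rw [Metric.mem_ball, Real.dist_eq, abs_of_pos (by linarith : (0:ℝ) < t - τ)]
        have : t ≤ τ + δ / 2 := min_le_right _ _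
        linarith
    have := le_csSup hbdd htT'
    linarith
  have : IsUnit (Φ 1) := hτ1 ▸ hτunit
  have hΦ1 : Φ 1 = U := by simp [hΦ]
  rw [hΦ1] at this
  obtain ⟨u, hu⟩ := this
  intro y
  refine ⟨(↑u⁻¹ : H →L[ℝ] H) y, ?_⟩
  have h1 : (↑u * ↑u⁻¹ : H →L[ℝ] H) = 1 := u.mul_inv
  have := congrFun (congrArg (fun M : H →L[ℝ] H => (M : H → H)) h1) y
  simpa [ContinuousLinearMap.mul_apply, hu] using this

end Surj

/-- Perturbation of frames in a real Hilbert space (Casazza–Christensen). -/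
theorem frame_perturbation
    {H : Type*} [NormedAddCommGroup H] [InnerProductSpace ℝ H] [CompleteSpace H]
    (f g : ℕ → H) (A B lam1 lam2 mu : ℝ) (hA : 0 < A) (hB : 0 < B)
    (hframe : ∀ x : H, Summable (fun i => ⟪x, f i⟫ ^ 2) ∧
      A * ‖x‖ ^ 2 ≤ ∑' i, ⟪x, f i⟫ ^ 2 ∧ (∑' i, ⟪x, f i⟫ ^ 2) ≤ B * ‖x‖ ^ 2)
    (hlam1 : 0 ≤ lam1) (hlam2 : 0 ≤ lam2) (hmu : 0 ≤ mu)
    (hlam2lt : lam2 < 1) (hmain : lam1 + mu / Real.sqrt A < 1)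
    (hpert : ∀ (F : Finset ℕ) (c : ℕ → ℝ),
      ‖∑ i ∈ F, c i • (f i - g i)‖ ≤ lam1 * ‖∑ i ∈ F, c i • f i‖ +
        lam2 * ‖∑ i ∈ F, c i • g i‖ + mu * Real.sqrt (∑ i ∈ F, c i ^ 2)) :
    ∀ x : H, Summable (fun i => ⟪x, g i⟫ ^ 2) ∧
      A * (1 - (lam1 + lam2 + mu / Real.sqrt A) / (1 + lam2)) ^ 2 * ‖x‖ ^ 2 ≤
        ∑' i, ⟪x, g i⟫ ^ 2 ∧
      (∑' i, ⟪x, g i⟫ ^ 2) ≤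
        B * (1 + (lam1 + lam2 + mu / Real.sqrt B) / (1 - lam2)) ^ 2 * ‖x‖ ^ 2 := by
  have hsA : (0:ℝ) < Real.sqrt A := Real.sqrt_pos.mpr hA
  have hsB : (0:ℝ) < Real.sqrt B := Real.sqrt_pos.mpr hB
  set C : ℝ := ((1 + lam1) * Real.sqrt B + mu) / (1 - lam2) with hCdef
  have hC0 : 0 ≤ C := by
    apply div_nonneg _ (by linarith)
    have : 0 ≤ (1 + lam1) * Real.sqrt B := by positivity
    linarith
  have hbf : ∀ x : H, Summable (fun i => ⟪x, f i⟫ ^ 2) ∧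
      (∑' i, ⟪x, f i⟫ ^ 2) ≤ B * ‖x‖ ^ 2 := fun x => ⟨(hframe x).1, (hframe x).2.2⟩
  have hsynf := synth_of_bessel hB.le hbf
  -- synthesis bound for g
  have hsyng : ∀ (F : Finset ℕ) (c : ℕ → ℝ),
      ‖∑ i ∈ F, c i • g i‖ ≤ C * Real.sqrt (∑ i ∈ F, c i ^ 2) := by
    intro F c
    have hp := hpert F c
    have hfg : ∑ i ∈ F, c i • g i = ∑ i ∈ F, c i • f i - ∑ i ∈ F, c i • (f i - g i) := by
      rw [← Finset.sum_sub_distrib]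
      exact Finset.sum_congr rfl fun i _ => by rw [smul_sub]; abel
    have h1 : ‖∑ i ∈ F, c i • g i‖ ≤ ‖∑ i ∈ F, c i • f i‖ + ‖∑ i ∈ F, c i • (f i - g i)‖ := by
      rw [hfg]; exact norm_sub_le _ _
    have h2 := hsynf F c
    have hsq0 : 0 ≤ Real.sqrt (∑ i ∈ F, c i ^ 2) := Real.sqrt_nonneg _
    rw [hCdef, div_mul_eq_mul_div, le_div_iff₀ (by linarith : (0:ℝ) < 1 - lam2)]
    nlinarith [mul_le_mul_of_nonneg_left h2 (by linarith : (0:ℝ) ≤ 1 + lam1),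
      norm_nonneg (∑ i ∈ F, c i • g i)]
  have hbesselg := fun x : H => bessel_of_synth hC0 hsyng x
  -- identity for the upper constant
  have hCid : C ^ 2 = B * (1 + (lam1 + lam2 + mu / Real.sqrt B) / (1 - lam2)) ^ 2 := by
    have h12 : (1:ℝ) - lam2 ≠ 0 := by linarith
    have key : Real.sqrt B * (1 + (lam1 + lam2 + mu / Real.sqrt B) / (1 - lam2)) * (1 - lam2)
        = (1 + lam1) * Real.sqrt B + mu := by
      field_simp
      ring
    have hC2 : C = Real.sqrt B * (1 + (lam1 + lam2 + mu / Real.sqrt B) / (1 - lam2)) := by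
      rw [hCdef, ← key, mul_div_cancel_right₀ _ h12]
    rw [hC2, mul_pow, Real.sq_sqrt hB.le]
  -- dual frame and operator U
  obtain ⟨V, hrecon, hcoef⟩ := exists_dual hA hB hframe
  obtain ⟨U, hU⟩ := exists_uop hB.le hC0 hbf hsyng V
  set lam1' : ℝ := lam1 + mu / Real.sqrt A with hl1def
  have hl1'0 : 0 ≤ lam1' := add_nonneg hlam1 (div_nonneg hmu hsA.le)
  have hsqb : ∀ x : H, Real.sqrt (∑' i, ⟪V x, f i⟫ ^ 2) ≤ ‖x‖ / Real.sqrt A := by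
    intro x
    calc Real.sqrt (∑' i, ⟪V x, f i⟫ ^ 2) ≤ Real.sqrt (‖x‖ ^ 2 / A) :=
          Real.sqrt_le_sqrt (hcoef x)
      _ = ‖x‖ / Real.sqrt A := by
          rw [Real.sqrt_div (sq_nonneg _), Real.sqrt_sq (norm_nonneg _)]
  have hkey : ∀ x : H, ‖x - U x‖ ≤ lam1' * ‖x‖ + lam2 * ‖U x‖ := by
    intro x
    set c : ℕ → ℝ := fun i => ⟪V x, f i⟫ with hcdef
    have hc2 : Summable (fun i => c i ^ 2) := (hframe (V x)).1
    have hsf : HasSum (fun i => c i • f i) x := hrecon x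
    have hsg : HasSum (fun i => c i • g i) (U x) := by
      rw [hU x]; exact (summable_smul_of_synth hC0 hsyng hc2).hasSum
    have hsfg : HasSum (fun i => c i • (f i - g i)) (x - U x) := by
      have := hsf.sub hsg
      simpa [smul_sub] using this
    have hsq : HasSum (fun i => c i ^ 2) (∑' i, c i ^ 2) := hc2.hasSum
    have hL : Filter.Tendsto (fun F : Finset ℕ => ‖∑ i ∈ F, c i • (f i - g i)‖)
        Filter.atTop (𝓝 ‖x - U x‖) := (continuous_norm.tendsto _).comp hsfg
    have hR : Filter.Tendsto (fun F : Finset ℕ =>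
        lam1 * ‖∑ i ∈ F, c i • f i‖ + lam2 * ‖∑ i ∈ F, c i • g i‖ +
          mu * Real.sqrt (∑ i ∈ F, c i ^ 2)) Filter.atTop
        (𝓝 (lam1 * ‖x‖ + lam2 * ‖U x‖ + mu * Real.sqrt (∑' i, c i ^ 2))) := by
      refine Filter.Tendsto.add (Filter.Tendsto.add ?_ ?_) ?_
      · exact ((continuous_norm.tendsto _).comp hsf).const_mul lam1
      · exact ((continuous_norm.tendsto _).comp hsg).const_mul lam2
      · exact ((Real.continuous_sqrt.tendsto _).comp hsq).const_mul mu
    have hle := le_of_tendsto_of_tendsto' hL hR (fun F => hpert F c)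
    have hb2 : mu * Real.sqrt (∑' i, c i ^ 2) ≤ mu * (‖x‖ / Real.sqrt A) :=
      mul_le_mul_of_nonneg_left (hsqb x) hmu
    calc ‖x - U x‖ ≤ lam1 * ‖x‖ + lam2 * ‖U x‖ + mu * Real.sqrt (∑' i, c i ^ 2) := hle
      _ ≤ lam1 * ‖x‖ + lam2 * ‖U x‖ + mu * (‖x‖ / Real.sqrt A) := by linarith
      _ = lam1' * ‖x‖ + lam2 * ‖U x‖ := by rw [hl1def]; field_simp; ring
  have hsurj : Function.Surjective U :=
    surjective_of_pert U lam1' lam2 hl1'0 hlam2 hmain hlam2lt hkey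
  -- conclusion
  intro x
  refine ⟨(hbesselg x).1, ?_, ?_⟩
  · -- lower bound
    have hG0 : 0 ≤ ∑' i, ⟪x, g i⟫ ^ 2 := tsum_nonneg fun i => sq_nonneg _
    by_cases hx0 : x = 0
    · simp only [hx0, norm_zero]
      simpa using hG0
    have hxn : 0 < ‖x‖ := norm_pos_iff.mpr hx0
    obtain ⟨y, hy⟩ := hsurj x
    set c : ℕ → ℝ := fun i => ⟪V y, f i⟫ with hcdef
    have hc2 : Summable (fun i => c i ^ 2) := (hframe (V y)).1
    set G : ℝ := Real.sqrt (∑' i, ⟪x, g i⟫ ^ 2) with hGdef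
    have hGn : 0 ≤ G := Real.sqrt_nonneg _
    have hG2 : G ^ 2 = ∑' i, ⟪x, g i⟫ ^ 2 := Real.sq_sqrt hG0
    have hsmg : Summable (fun i => c i • g i) := summable_smul_of_synth hC0 hsyng hc2
    have h1 : ‖x‖ ^ 2 = ∑' i, c i * ⟪x, g i⟫ := by
      have e1 : ⟪x, U y⟫ = ∑' i, c i * ⟪x, g i⟫ := by
        rw [hU y]
        exact inner_tsum_smul hsmg x
      rw [← real_inner_self_eq_norm_sq, ← hy] at *
      exact e1
    have h2 : ∑' i, c i * ⟪x, g i⟫ ≤ Real.sqrt (∑' i, c i ^ 2) * G := by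
      rw [hGdef]
      exact tsum_mul_le_sqrt_mul_sqrt hc2 (hbesselg x).1
    have h3 : Real.sqrt (∑' i, c i ^ 2) ≤ ‖y‖ / Real.sqrt A := hsqb y
    have hCS : ‖x‖ ^ 2 ≤ ‖y‖ / Real.sqrt A * G := by
      calc ‖x‖ ^ 2 = ∑' i, c i * ⟪x, g i⟫ := h1
        _ ≤ Real.sqrt (∑' i, c i ^ 2) * G := h2
        _ ≤ ‖y‖ / Real.sqrt A * G := mul_le_mul_of_nonneg_right h3 hGn
    have h4 : (1 - lam1') * ‖y‖ ≤ (1 + lam2) * ‖x‖ := by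
      have hk := hkey y
      rw [hy] at hk
      have : ‖y‖ ≤ ‖x‖ + ‖y - x‖ := by
        have := norm_add_le x (y - x)
        simpa using this
      nlinarith [norm_nonneg y]
    have e1 : Real.sqrt A * ‖x‖ ^ 2 ≤ ‖y‖ * G := by
      rw [div_mul_eq_mul_div, le_div_iff₀ hsA] at hCS
      linarith
    have hP0 : 0 < 1 - lam1' := by linarith
    have e2 : (1 - lam1') * (Real.sqrt A * ‖x‖ ^ 2) ≤ (1 + lam2) * ‖x‖ * G := by
      calc (1 - lam1') * (Real.sqrt A * ‖x‖ ^ 2) ≤ (1 - lam1') * (‖y‖ * G) :=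
            mul_le_mul_of_nonneg_left e1 hP0.le
        _ = (1 - lam1') * ‖y‖ * G := by ring
        _ ≤ (1 + lam2) * ‖x‖ * G := mul_le_mul_of_nonneg_right h4 hGn
    have e3 : (1 - lam1') * Real.sqrt A * ‖x‖ ≤ (1 + lam2) * G := by
      nlinarith
    have e4 : ((1 - lam1') * Real.sqrt A * ‖x‖) ^ 2 ≤ ((1 + lam2) * G) ^ 2 := by
      apply pow_le_pow_left₀ _ e3
      positivity
    have hconst : 1 - (lam1 + lam2 + mu / Real.sqrt A) / (1 + lam2) = (1 - lam1') / (1 + lam2) := by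
      rw [hl1def]
      field_simp
      ring
    have h2pos : (0:ℝ) < (1 + lam2) ^ 2 := by positivity
    rw [hconst, ← hG2, div_pow, mul_comm A, mul_assoc, div_mul_eq_mul_div,
      div_le_iff₀ h2pos]
    nlinarith [Real.sq_sqrt hA.le, e4]
  · calc (∑' i, ⟪x, g i⟫ ^ 2) ≤ C ^ 2 * ‖x‖ ^ 2 := (hbesselg x).2
      _ = B * (1 + (lam1 + lam2 + mu / Real.sqrt B) / (1 - lam2)) ^ 2 * ‖x‖ ^ 2 := by
          rw [hCid]
end

section
/- Let X be a real Banach space, let U : X → X be a linear map, and let λ₁, λ₂ ∈ [0, 1). Assume that ‖x − U x‖ ≤ λ₁‖x‖ + λ₂‖U x‖ for all x ∈ X. Then U is bijective, and its inverse U⁻¹ satisfies ((1 − λ₂)/(1 + λ₁))·‖y‖ ≤ ‖U⁻¹ y‖ ≤ ((1 + λ₂)/(1 − λ₁))·‖y‖ for all y ∈ X. -/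
/-- Casazza–Christensen / Kato perturbation lemma: invertibility of `U` and
norm bounds for the inverse. -/
theorem perturbation_lemma_inverse_bounds
    {X : Type*} [NormedAddCommGroup X] [NormedSpace ℝ X] [CompleteSpace X]
    (U : X →ₗ[ℝ] X) (lam1 lam2 : ℝ)
    (hlam1 : 0 ≤ lam1) (hlam1' : lam1 < 1) (hlam2 : 0 ≤ lam2) (hlam2' : lam2 < 1)
    (h : ∀ x : X, ‖x - U x‖ ≤ lam1 * ‖x‖ + lam2 * ‖U x‖) :
    Function.Bijective U ∧
      ∀ y : X, (1 - lam2) / (1 + lam1) * ‖y‖ ≤ ‖Function.invFun U y‖ ∧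
        ‖Function.invFun U y‖ ≤ (1 + lam2) / (1 - lam1) * ‖y‖ := by
  -- U is bounded
  have hbd : ∀ x : X, ‖U x‖ ≤ (1 + lam1) / (1 - lam2) * ‖x‖ := by
    intro x
    have h1 := h x
    have h2 : ‖U x‖ ≤ ‖x‖ + ‖x - U x‖ := by
      linarith [norm_sub_norm_le (U x) x, (norm_sub_rev x (U x))]
    rw [div_mul_eq_mul_div, le_div_iff₀ (by linarith)]
    nlinarith [norm_nonneg x, norm_nonneg (U x)]
  set Uc : X →L[ℝ] X := U.mkContinuous ((1 + lam1) / (1 - lam2)) hbd with hUc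
  have hUcx : ∀ x, Uc x = U x := fun _ => rfl
  -- the homotopy
  set A : ℝ → (X →L[ℝ] X) := fun t => 1 - t • (1 - Uc) with hA
  have hAx : ∀ t x, A t x = x - t • (x - U x) := by
    intro t x
    simp [hA, ContinuousLinearMap.sub_apply, ContinuousLinearMap.smul_apply, hUcx]
  have hA0 : A 0 = 1 := by simp [hA]
  have hA1 : A 1 = Uc := by simp [hA]
  set c : ℝ := min (1 - lam1) (1 - lam2) / 2 with hc
  have hcpos : 0 < c := by
    have : 0 < min (1 - lam1) (1 - lam2) := lt_min (by linarith) (by linarith)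
    positivity
  have hc1 : 2 * c ≤ 1 - lam1 := by
    have := min_le_left (1 - lam1) (1 - lam2); rw [hc]; linarith
  have hc2 : 2 * c ≤ 1 - lam2 := by
    have := min_le_right (1 - lam1) (1 - lam2); rw [hc]; linarith
  -- uniform lower bound on A t for t ∈ [0,1]
  have hlow : ∀ t, 0 ≤ t → t ≤ 1 → ∀ x : X, c * ‖x‖ ≤ ‖A t x‖ := by
    intro t ht0 ht1 x
    have hd := h x
    set a := ‖x‖; set b := ‖U x‖; set d := ‖x - U x‖; set e := ‖A t x‖
    have ha : 0 ≤ a := norm_nonneg _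
    have hbn : 0 ≤ b := norm_nonneg _
    have hdn : 0 ≤ d := norm_nonneg _
    have hen : 0 ≤ e := norm_nonneg _
    -- a ≤ e + t * d
    have h1 : a ≤ e + t * d := by
      have : x = A t x + t • (x - U x) := by rw [hAx]; abel
      calc a = ‖A t x + t • (x - U x)‖ := by rw [← this]
        _ ≤ e + ‖t • (x - U x)‖ := norm_add_le _ _
        _ = e + t * d := by rw [norm_smul, Real.norm_eq_abs, abs_of_nonneg ht0]
    -- b ≤ e + (1 - t) * d
    have h2 : b ≤ e + (1 - t) * d := by
      have : U x = A t x - (1 - t) • (x - U x) := by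
        rw [hAx, sub_smul, one_smul]; abel
      calc b = ‖A t x - (1 - t) • (x - U x)‖ := by rw [← this]
        _ ≤ e + ‖(1 - t) • (x - U x)‖ := norm_sub_le _ _
        _ = e + (1 - t) * d := by
            rw [norm_smul, Real.norm_eq_abs, abs_of_nonneg (by linarith)]
    -- combine
    nlinarith [mul_nonneg ht0 hdn, mul_nonneg (mul_nonneg ht0 hlam2) hdn,
      mul_nonneg ht0 (mul_nonneg hlam2 hdn), mul_nonneg ht0 hen,
      mul_nonneg (sub_nonneg.2 ht1) hdn, mul_nonneg hlam2 hdn,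
      mul_nonneg ht0 ha, mul_nonneg hlam1 ha]
  -- inverse norm bound for any unit equal to A t
  rcases subsingleton_or_nontrivial X with hX | hX
  · -- trivial case
    have hbij : Function.Bijective U := by
      constructor
      · intro a b _; exact Subsingleton.elim a b
      · intro y; exact ⟨0, Subsingleton.elim _ _⟩
    refine ⟨hbij, fun y => ?_⟩
    have hy : ‖y‖ = 0 := by rw [norm_eq_zero]; exact Subsingleton.elim _ _
    have hy2 : ‖Function.invFun U y‖ = 0 := by rw [norm_eq_zero]; exact Subsingleton.elim _ _
    rw [hy, hy2]; constructor <;> simp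
  -- nontrivial case
  -- step lemma
  have hK : ∀ s t : ℝ, A t - A s = (s - t) • (1 - Uc) := by
    intro s t; rw [hA]; simp; module
  have hstep : ∀ s t : ℝ, 0 ≤ s → s ≤ 1 → 0 ≤ t → t ≤ 1 →
      ‖A t - A s‖ < c → IsUnit (A s) → IsUnit (A t) := by
    intro s t hs0 hs1 ht0 ht1 hdiff hu
    rcases hu with ⟨u, hu⟩
    set W : X →L[ℝ] X := ((u⁻¹ : (X →L[ℝ] X)ˣ) : X →L[ℝ] X) with hW
    have hinv : ‖W‖ ≤ c⁻¹ := by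
      apply ContinuousLinearMap.opNorm_le_bound _ (by positivity)
      intro y
      have h1 : c * ‖W y‖ ≤ ‖A s (W y)‖ := hlow s hs0 hs1 _
      have h2 : A s (W y) = y := by
        rw [← hu]
        have hm : (u : X →L[ℝ] X) * W = 1 := by
          rw [hW, ← Units.val_mul, mul_inv_cancel, Units.val_one]
        calc (u : X →L[ℝ] X) (W y) = ((u : X →L[ℝ] X) * W) y := rfl
          _ = y := by rw [hm]; rfl
      rw [h2] at h1
      rw [inv_mul_eq_div, le_div_iff₀ hcpos]
      linarith
    have hlt : ‖A t - (u : X →L[ℝ] X)‖ < ‖W‖⁻¹ := by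
      rw [hu]
      have hpos : 0 < ‖W‖ := Units.norm_pos u⁻¹
      calc ‖A t - A s‖ < c := hdiff
        _ = (c⁻¹)⁻¹ := by rw [inv_inv]
        _ ≤ ‖W‖⁻¹ := by apply inv_anti₀ hpos hinv
    exact (Units.ofNearby u (A t) hlt).isUnit
  -- choose N
  obtain ⟨N, hN⟩ := exists_nat_gt (‖(1 : X →L[ℝ] X) - Uc‖ / c)
  have hNpos : 0 < (N : ℝ) := lt_of_le_of_lt (div_nonneg (norm_nonneg _) hcpos.le) hN
  have hNstep : ‖(1 : X →L[ℝ] X) - Uc‖ / N < c := by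
    rw [div_lt_iff₀ hNpos]
    rw [div_lt_iff₀ hcpos] at hN
    linarith [mul_comm c (N : ℝ)]
  -- induction: A (n / N) is a unit for n ≤ N
  have hind : ∀ n : ℕ, n ≤ N → IsUnit (A (n / N)) := by
    intro n
    induction n with
    | zero => intro _; simp only [Nat.cast_zero, zero_div, hA0]; exact isUnit_one
    | succ k ih =>
      intro hk
      have hk' : k ≤ N := Nat.le_of_succ_le hk
      have hkN : (k : ℝ) / N ≤ 1 := by
        rw [div_le_one hNpos]; exact_mod_cast hk'
      have hkN0 : (0:ℝ) ≤ (k : ℝ) / N := by positivity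
      have hk1N : ((k+1 : ℕ) : ℝ) / N ≤ 1 := by
        rw [div_le_one hNpos]; exact_mod_cast hk
      have hk1N0 : (0:ℝ) ≤ ((k+1 : ℕ) : ℝ) / N := by positivity
      apply hstep ((k : ℝ)/N) (((k+1 : ℕ) : ℝ)/N) hkN0 hkN hk1N0 hk1N _ (ih hk')
      rw [hK]
      rw [norm_smul (((k:ℝ)/N - ((k+1:ℕ):ℝ)/N)) ((1 : X →L[ℝ] X) - Uc), Real.norm_eq_abs]
      have : (k : ℝ)/N - ((k+1 : ℕ) : ℝ)/N = -(1/N) := by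
        push_cast; field_simp; ring
      rw [this, abs_neg, abs_of_nonneg (by positivity)]
      calc 1/(N:ℝ) * ‖(1 : X →L[ℝ] X) - Uc‖ = ‖(1 : X →L[ℝ] X) - Uc‖ / N := by ring
        _ < c := hNstep
  -- A 1 = Uc is a unit
  have hunit : IsUnit Uc := by
    have := hind N le_rfl
    rwa [div_self (ne_of_gt hNpos), hA1] at this
  rcases hunit with ⟨u, hu⟩
  set V : X →L[ℝ] X := ((u⁻¹ : (X →L[ℝ] X)ˣ) : X →L[ℝ] X) with hV
  have hUV : ∀ y, U (V y) = y := by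
    intro y
    have : (u : X →L[ℝ] X) * V = 1 := by
      rw [hV, ← Units.val_mul, mul_inv_cancel, Units.val_one]
    have h2 : Uc (V y) = y := by
      rw [← hu]
      calc (u : X →L[ℝ] X) (V y) = ((u : X →L[ℝ] X) * V) y := rfl
        _ = y := by rw [this]; rfl
    rw [← hUcx]; exact h2
  have hVU : ∀ x, V (U x) = x := by
    intro x
    have : V * (u : X →L[ℝ] X) = 1 := by
      rw [hV, ← Units.val_mul, inv_mul_cancel, Units.val_one]
    calc V (U x) = V (Uc x) := by rw [hUcx]
      _ = (V * (u : X →L[ℝ] X)) x := by rw [hu]; rfl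
      _ = x := by rw [this]; rfl
  have hbij : Function.Bijective U :=
    ⟨Function.LeftInverse.injective hVU, Function.RightInverse.surjective hUV⟩
  refine ⟨hbij, fun y => ?_⟩
  have hinvV : Function.invFun U y = V y := by
    apply hbij.injective
    rw [Function.rightInverse_invFun hbij.surjective y, hUV]
  rw [hinvV]
  set x := V y with hx
  have hUxy : U x = y := hUV y
  have hh := h x
  rw [hUxy] at hh
  have h1 : ‖x‖ ≤ ‖y‖ + ‖x - y‖ := by
    calc ‖x‖ = ‖y + (x - y)‖ := by congr 1; abel
      _ ≤ ‖y‖ + ‖x - y‖ := norm_add_le _ _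
  have h2 : ‖y‖ ≤ ‖x‖ + ‖x - y‖ := by
    calc ‖y‖ = ‖x - (x - y)‖ := by congr 1; abel
      _ ≤ ‖x‖ + ‖x - y‖ := norm_sub_le _ _
  constructor
  · rw [div_mul_eq_mul_div, div_le_iff₀ (by linarith)]
    nlinarith [norm_nonneg x, norm_nonneg y, norm_nonneg (x - y)]
  · rw [div_mul_eq_mul_div, le_div_iff₀ (by linarith)]
    nlinarith [norm_nonneg x, norm_nonneg y, norm_nonneg (x - y)]
end

section
/- Let X be a real Banach space, let 1 < p < ∞ and let q = p/(p − 1) be its conjugate exponent. Let (g_i)_{i∈ℕ} be a sequence of continuous linear functionals on X and let B > 0. Assume that for every f ∈ X the family (‖g_i(f)‖^p)_{i∈ℕ} is summable and (∑_{i=1}^∞ |g_i(f)|^p)^{1/p} ≤ B‖f‖. Then for every d = (d_i)_{i∈ℕ} ∈ ℓ^q(ℕ), the family (d_i · g_i)_{i∈ℕ} is summable in the dual space X* (with respect to the operator norm), and ‖∑_{i=1}^∞ d_i g_i‖ ≤ B·(∑_{i=1}^∞ |d_i|^q)^{1/q}; in particular the synthesis operator T : ℓ^q(ℕ) → X*,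 T(d) = ∑_{i=1}^∞ d_i g_i, is a well-defined bounded linear operator with ‖T‖ ≤ B. -/
/-- If `(g_i)` is an `ℓ^p`-Bessel sequence for `X` with bound `B`, then for every
`d ∈ ℓ^q` (with `q` the conjugate exponent) the series `∑ d_i g_i` converges in `X*`
with norm at most `B‖d‖_q`; in particular the synthesis operator
`T : ℓ^q → X*` is well defined and bounded with `‖T‖ ≤ B`. -/
theorem besselSequence_synthesis_bounded
    {X : Type*} [NormedAddCommGroup X] [NormedSpace ℝ X] [CompleteSpace X]
    (p q : ℝ) (hp : 1 < p) (hq : q = p / (p - 1))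
    [Fact (1 ≤ ENNReal.ofReal q)]
    (g : ℕ → X →L[ℝ] ℝ) (B : ℝ) (hB : 0 < B)
    (hbessel : ∀ f : X, Summable (fun i => |g i f| ^ p) ∧
      (∑' i, |g i f| ^ p) ^ (1 / p) ≤ B * ‖f‖) :
    (∀ d : ℕ → ℝ, Summable (fun i => |d i| ^ q) →
      Summable (fun i => d i • g i) ∧
        ‖∑' i, d i • g i‖ ≤ B * (∑' i, |d i| ^ q) ^ (1 / q)) ∧
    ∃ T : lp (fun _ : ℕ => ℝ) (ENNReal.ofReal q) →L[ℝ] (X →L[ℝ] ℝ),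
      ‖T‖ ≤ B ∧ ∀ d : lp (fun _ : ℕ => ℝ) (ENNReal.ofReal q),
        T d = ∑' i, d i • g i := by
  have hpq : p.HolderConjugate q := (Real.holderConjugate_iff_eq_conjExponent hp).2 hq
  have hq1 : 1 < q := hpq.symm.lt
  have hq0 : 0 < q := hpq.symm.pos
  -- finite-sum estimate
  have key : ∀ (d : ℕ → ℝ) (s : Finset ℕ),
      ‖∑ i ∈ s, d i • g i‖ ≤ B * (∑ i ∈ s, |d i| ^ q) ^ (1 / q) := by
    intro d s
    have hsum_nonneg : (0:ℝ) ≤ ∑ i ∈ s, |d i| ^ q :=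
      Finset.sum_nonneg fun i _ => Real.rpow_nonneg (abs_nonneg _) _
    apply ContinuousLinearMap.opNorm_le_bound _ (by positivity)
    intro f
    have h1 : ‖(∑ i ∈ s, d i • g i) f‖ ≤ ∑ i ∈ s, |g i f| * |d i| := by
      simp only [ContinuousLinearMap.sum_apply, ContinuousLinearMap.smul_apply]
      calc ‖∑ i ∈ s, d i • g i f‖ ≤ ∑ i ∈ s, ‖d i • g i f‖ := norm_sum_le _ _
        _ = ∑ i ∈ s, |g i f| * |d i| := by
            simp [norm_smul, Real.norm_eq_abs, mul_comm]
    have h2 : ∑ i ∈ s, |g i f| * |d i| ≤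
        (∑ i ∈ s, |g i f| ^ p) ^ (1 / p) * (∑ i ∈ s, |d i| ^ q) ^ (1 / q) := by
      have := Real.inner_le_Lp_mul_Lq (s := s) (fun i => |g i f|) (fun i => |d i|) hpq
      simpa [abs_abs] using this
    have h3 : (∑ i ∈ s, |g i f| ^ p) ^ (1 / p) ≤ B * ‖f‖ := by
      refine le_trans ?_ (hbessel f).2
      apply Real.rpow_le_rpow (Finset.sum_nonneg fun i _ => Real.rpow_nonneg (abs_nonneg _) _)
        (Summable.sum_le_tsum s (fun i _ => Real.rpow_nonneg (abs_nonneg _) _) (hbessel f).1)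
        (by positivity)
    calc ‖(∑ i ∈ s, d i • g i) f‖ ≤ (B * ‖f‖) * (∑ i ∈ s, |d i| ^ q) ^ (1 / q) :=
          h1.trans (h2.trans (by
            apply mul_le_mul_of_nonneg_right h3 (Real.rpow_nonneg hsum_nonneg _)))
      _ = B * (∑ i ∈ s, |d i| ^ q) ^ (1 / q) * ‖f‖ := by ring
  -- part 1
  have part1 : ∀ d : ℕ → ℝ, Summable (fun i => |d i| ^ q) →
      Summable (fun i => d i • g i) ∧
        ‖∑' i, d i • g i‖ ≤ B * (∑' i, |d i| ^ q) ^ (1 / q) := by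
    intro d hd
    have hsummable : Summable (fun i => d i • g i) := by
      rw [summable_iff_vanishing]
      intro e he
      rcases Metric.mem_nhds_iff.1 he with ⟨ε, hε, hball⟩
      have hδ : (0:ℝ) < (ε / (2 * B)) ^ q := Real.rpow_pos_of_pos (by positivity) _
      obtain ⟨s, hs⟩ := (summable_iff_vanishing.1 hd) (Metric.ball 0 ((ε / (2 * B)) ^ q))
        (Metric.ball_mem_nhds 0 hδ)
      refine ⟨s, fun t ht => ?_⟩
      apply hball
      rw [Metric.mem_ball, dist_zero_right]
      have htsum : ∑ i ∈ t, |d i| ^ q < (ε / (2 * B)) ^ q := by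
        have := hs t ht
        rw [Metric.mem_ball, dist_zero_right, Real.norm_eq_abs] at this
        exact (le_abs_self _).trans_lt this
      calc ‖∑ i ∈ t, d i • g i‖ ≤ B * (∑ i ∈ t, |d i| ^ q) ^ (1 / q) := key d t
        _ < B * ((ε / (2 * B)) ^ q) ^ (1 / q) := by
            apply mul_lt_mul_of_pos_left _ hB
            exact Real.rpow_lt_rpow
              (Finset.sum_nonneg fun i _ => Real.rpow_nonneg (abs_nonneg _) _) htsum
              (by positivity)
        _ = B * (ε / (2 * B)) := by
            rw [← Real.rpow_mul (by positivity), mul_one_div, div_self hq0.ne', Real.rpow_one]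
        _ = ε / 2 := by field_simp
        _ < ε := by linarith
    refine ⟨hsummable, ?_⟩
    have h := hsummable.hasSum
    have htend := h.tendsto_sum_nat
    refine le_of_tendsto' ((continuous_norm.tendsto _).comp h) fun s => ?_
    calc ‖∑ i ∈ s, d i • g i‖ ≤ B * (∑ i ∈ s, |d i| ^ q) ^ (1 / q) := key d s
      _ ≤ B * (∑' i, |d i| ^ q) ^ (1 / q) := by
          apply mul_le_mul_of_nonneg_left _ hB.le
          exact Real.rpow_le_rpow
            (Finset.sum_nonneg fun i _ => Real.rpow_nonneg (abs_nonneg _) _)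
            (Summable.sum_le_tsum s (fun i _ => Real.rpow_nonneg (abs_nonneg _) _) hd)
            (by positivity)
  refine ⟨part1, ?_⟩
  -- part 2
  have hqtr : (ENNReal.ofReal q).toReal = q := ENNReal.toReal_ofReal hq0.le
  have hmem : ∀ d : lp (fun _ : ℕ => ℝ) (ENNReal.ofReal q),
      Summable (fun i => |d i| ^ q) := by
    intro d
    have := lp.hasSum_norm (by rw [hqtr]; exact hq0) d
    rw [hqtr] at this
    exact this.summable.congr (fun i => by rw [Real.norm_eq_abs])
  have hnorm : ∀ d : lp (fun _ : ℕ => ℝ) (ENNReal.ofReal q),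
      (∑' i, |d i| ^ q) ^ (1 / q) = ‖d‖ := by
    intro d
    rw [lp.norm_eq_tsum_rpow (by rw [hqtr]; exact hq0) d, hqtr]
    simp [Real.norm_eq_abs]
  let L : lp (fun _ : ℕ => ℝ) (ENNReal.ofReal q) →ₗ[ℝ] (X →L[ℝ] ℝ) :=
    { toFun := fun d => ∑' i, d i • g i
      map_add' := by
        intro d e
        have hd := (part1 d (hmem d)).1
        have he := (part1 e (hmem e)).1
        rw [← Summable.tsum_add hd he]
        apply tsum_congr
        intro i
        rw [lp.coeFn_add]
        simp [add_smul]
      map_smul' := by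
        intro c d
        have hd := (part1 d (hmem d)).1
        rw [RingHom.id_apply, ← Summable.tsum_const_smul c hd]
        apply tsum_congr
        intro i
        rw [lp.coeFn_smul]
        simp [smul_smul] }
  refine ⟨L.mkContinuous B (fun d => ?_), ?_, fun d => rfl⟩
  · calc ‖∑' i, d i • g i‖ ≤ B * (∑' i, |d i| ^ q) ^ (1 / q) := (part1 d (hmem d)).2
      _ = B * ‖d‖ := by rw [hnorm d]
  · exact LinearMap.mkContinuous_norm_le L hB.le _
end

section
/- Let X be a real Banach space, let 1 < p < ∞ and let q = p/(p − 1) be its conjugate exponent. Let (g_i)_{i∈ℕ} be a sequence of continuous linear functionals on X and let B > 0. Assume that for every d = (d_i)_{i∈ℕ} ∈ ℓ^q(ℕ) the family (d_i · g_i)_{i∈ℕ} is summable in the dual space X* (with respect to the operator norm) and ‖∑_{i=1}^∞ d_i g_i‖ ≤ B·(∑_{i=1}^∞ |d_i|^q)^{1/q}. Then for every f ∈ X the family (|g_i(f)|^p)_{i∈ℕ} is summable and (∑_{i=1}^∞ |g_i(f)|^p)^{1/p} ≤ B‖f‖; that is, (g_i) is an ℓ^p-Bessel sequence for X with bound B.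 -/
open Real Finset

private lemma sign_abs_rpow_mul (p : ℝ) (hp1 : 0 < p - 1) (x : ℝ) :
    Real.sign x * |x| ^ (p - 1) * x = |x| ^ p := by
  rcases lt_trichotomy x 0 with h | h | h
  · rw [Real.sign_of_neg h, abs_of_neg h]
    rw [show (-x)^p = (-x)^(p-1) * (-x)^(1:ℝ) from by
      rw [← Real.rpow_add (by linarith)]; ring_nf]
    rw [Real.rpow_one]; ring
  · simp [h, Real.zero_rpow (by linarith : p ≠ 0)]
  · rw [Real.sign_of_pos h, abs_of_pos h]
    rw [show x^p = x^(p-1) * x^(1:ℝ) from by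
      rw [← Real.rpow_add h]; ring_nf]
    rw [Real.rpow_one]; ring

private lemma abs_sign_abs_rpow (p q : ℝ) (hp1 : 0 < p - 1) (hq0 : 0 < q)
    (hpq : (p - 1) * q = p) (x : ℝ) :
    |Real.sign x * |x| ^ (p - 1)| ^ q = |x| ^ p := by
  rcases eq_or_ne x 0 with h | h
  · simp [h, Real.zero_rpow hp1.ne', Real.zero_rpow hq0.ne',
      Real.zero_rpow (by linarith : p ≠ 0)]
  · have : |Real.sign x * |x| ^ (p - 1)| = |x| ^ (p - 1) := by
      rw [abs_mul, abs_of_nonneg (Real.rpow_nonneg (abs_nonneg x) _)]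
      rcases lt_or_gt_of_ne h with h' | h'
      · rw [Real.sign_of_neg h']; simp
      · rw [Real.sign_of_pos h']; simp
    rw [this, ← Real.rpow_mul (abs_nonneg x), hpq]

/-- If the synthesis map `d ↦ ∑ d_i g_i` from `ℓ^q` into `X*` is well defined and
bounded by `B` (with `q` the conjugate exponent of `p`), then `(g_i)` is an
`ℓ^p`-Bessel sequence for `X` with bound `B`. -/
theorem synthesis_bounded_implies_besselSequence
    {X : Type*} [NormedAddCommGroup X] [NormedSpace ℝ X] [CompleteSpace X]
    (p q : ℝ) (hp : 1 < p) (hq : q = p / (p - 1))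
    (g : ℕ → X →L[ℝ] ℝ) (B : ℝ) (hB : 0 < B)
    (hsynth : ∀ d : ℕ → ℝ, Summable (fun i => |d i| ^ q) →
      Summable (fun i => d i • g i) ∧
        ‖∑' i, d i • g i‖ ≤ B * (∑' i, |d i| ^ q) ^ (1 / q)) :
    ∀ f : X, Summable (fun i => |g i f| ^ p) ∧
      (∑' i, |g i f| ^ p) ^ (1 / p) ≤ B * ‖f‖ := by
  intro f
  have hp0 : (0:ℝ) < p := lt_trans one_pos hp
  have hp1 : (0:ℝ) < p - 1 := by linarith
  have hq0 : (0:ℝ) < q := by rw [hq]; positivity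
  have hpq : (p - 1) * q = p := by rw [hq]; field_simp
  have hinv : 1/p + 1/q = 1 := by rw [hq]; field_simp; ring
  have hBf : 0 ≤ B * ‖f‖ := by positivity
  have key : ∀ s : Finset ℕ, ∑ i ∈ s, |g i f| ^ p ≤ (B * ‖f‖) ^ p := by
    intro s
    set d : ℕ → ℝ := fun i => if i ∈ s then Real.sign (g i f) * |g i f| ^ (p-1) else 0 with hd
    have hd0 : ∀ i ∉ s, d i = 0 := fun i hi => by simp [hd, hi]
    have hdq : ∀ i ∈ s, |d i| ^ q = |g i f| ^ p := fun i hi => by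
      simp only [hd, if_pos hi]; exact abs_sign_abs_rpow p q hp1 hq0 hpq _
    have hsum : Summable (fun i => |d i| ^ q) := by
      apply summable_of_ne_finset_zero (s := s)
      intro i hi
      simp [hd0 i hi, Real.zero_rpow hq0.ne']
    obtain ⟨hS1, hS2⟩ := hsynth d hsum
    set S := ∑ i ∈ s, |g i f| ^ p with hSdef
    have hS0 : 0 ≤ S := Finset.sum_nonneg fun i _ => Real.rpow_nonneg (abs_nonneg _) _
    have htq : (∑' i, |d i| ^ q) = S := by
      rw [tsum_eq_sum (s := s) (fun i hi => by simp [hd0 i hi, Real.zero_rpow hq0.ne'])]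
      exact Finset.sum_congr rfl hdq
    have htsum : (∑' i, d i • g i) = ∑ i ∈ s, d i • g i :=
      tsum_eq_sum (fun i hi => by simp [hd0 i hi])
    have happ : (∑ i ∈ s, d i • g i) f = S := by
      rw [ContinuousLinearMap.sum_apply]
      refine Finset.sum_congr rfl fun i hi => ?_
      rw [ContinuousLinearMap.smul_apply, smul_eq_mul]
      simp only [hd, if_pos hi]
      exact sign_abs_rpow_mul p hp1 _
    have hle : S ≤ B * S ^ (1/q) * ‖f‖ := by
      calc S = (∑ i ∈ s, d i • g i) f := happ.symm
        _ ≤ ‖∑ i ∈ s, d i • g i‖ * ‖f‖ := by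
            calc (∑ i ∈ s, d i • g i) f ≤ |(∑ i ∈ s, d i • g i) f| := le_abs_self _
              _ ≤ ‖∑ i ∈ s, d i • g i‖ * ‖f‖ := (∑ i ∈ s, d i • g i).le_opNorm f
        _ ≤ B * S ^ (1/q) * ‖f‖ := by
            apply mul_le_mul_of_nonneg_right _ (norm_nonneg f)
            rw [← htsum, ← htq]
            exact hS2
    rcases eq_or_lt_of_le hS0 with h0 | h0
    · rw [← h0]; positivity
    · have hdiv : S ^ (1/p) ≤ B * ‖f‖ := by
        have hq' : (0:ℝ) < S ^ (1/q) := Real.rpow_pos_of_pos h0 _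
        have : S ^ (1/p) * S ^ (1/q) ≤ (B * ‖f‖) * S ^ (1/q) := by
          rw [← Real.rpow_add h0, hinv, Real.rpow_one]
          calc S ≤ B * S ^ (1/q) * ‖f‖ := hle
            _ = (B * ‖f‖) * S ^ (1/q) := by ring
        exact le_of_mul_le_mul_right this hq'
      calc S = (S ^ (1/p)) ^ p := by
            rw [← Real.rpow_mul hS0, one_div_mul_cancel hp0.ne', Real.rpow_one]
        _ ≤ (B * ‖f‖) ^ p := Real.rpow_le_rpow (Real.rpow_nonneg hS0 _) hdiv hp0.le
  have hsummable : Summable (fun i => |g i f| ^ p) :=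
    summable_of_sum_le (fun i => Real.rpow_nonneg (abs_nonneg _) _) key
  refine ⟨hsummable, ?_⟩
  have htle : (∑' i, |g i f| ^ p) ≤ (B * ‖f‖) ^ p :=
    Summable.tsum_le_of_sum_le hsummable key
  calc (∑' i, |g i f| ^ p) ^ (1/p) ≤ ((B * ‖f‖) ^ p) ^ (1/p) :=
        Real.rpow_le_rpow (tsum_nonneg fun i => Real.rpow_nonneg (abs_nonneg _) _) htle
          (by positivity)
    _ = B * ‖f‖ := by
        rw [← Real.rpow_mul hBf, mul_one_div_cancel hp0.ne', Real.rpow_one]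
end

section
/- Let X and Θ be real normed spaces, let G, H : X → Θ be maps, and let A, B, λ > 0. Assume: (i) A‖f‖ ≤ ‖G f‖ ≤ B‖f‖ for all f ∈ X; (ii) ‖G f − H f‖ ≤ λ·min(‖G f‖, ‖H f‖) for all f ∈ X; (iii) there is a continuous map S : Θ → X with S(G f) = f for all f ∈ X; and (iv) there is a continuous linear map D : Θ → Θ with D(H f) = G f for all f ∈ X. Then (A/(1 + λ))·‖f‖ ≤ ‖H f‖ ≤ (1 + λ)·B·‖f‖ for all f ∈ X, and the continuous map V := S ∘ D satisfies V(H f) = f for all f ∈ X. -/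
/-- Sufficiency direction of the stability theorem (single-seminorm instance):
if `G` is the analysis map of a frame with bounds `A, B` and reconstruction `S`,
and `H` satisfies the perturbation condition `‖Gf - Hf‖ ≤ λ·min(‖Gf‖, ‖Hf‖)` with
an intertwining operator `D`, then `H` satisfies the frame inequalities with bounds
`A/(1+λ)` and `(1+λ)B`, and `V := S ∘ D` reconstructs from `H`. -/
theorem frame_stability_sufficient
    {X Θ : Type*} [NormedAddCommGroup X] [NormedSpace ℝ X]
    [NormedAddCommGroup Θ] [NormedSpace ℝ Θ]
    (G H : X → Θ) (S : Θ → X) (D : Θ →L[ℝ] Θ) (A B lam : ℝ)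
    (hA : 0 < A) (hB : 0 < B) (hlam : 0 < lam)
    (hG : ∀ f : X, A * ‖f‖ ≤ ‖G f‖ ∧ ‖G f‖ ≤ B * ‖f‖)
    (hpert : ∀ f : X, ‖G f - H f‖ ≤ lam * min ‖G f‖ ‖H f‖)
    (hScont : Continuous S) (hS : ∀ f : X, S (G f) = f)
    (hD : ∀ f : X, D (H f) = G f) :
    (∀ f : X, A / (1 + lam) * ‖f‖ ≤ ‖H f‖ ∧ ‖H f‖ ≤ (1 + lam) * B * ‖f‖) ∧
    Continuous (S ∘ D) ∧ ∀ f : X, (S ∘ D) (H f) = f := by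
  refine ⟨fun f => ?_, hScont.comp D.continuous, fun f => by simp [hD, hS]⟩
  obtain ⟨h1, h2⟩ := hG f
  have hp := hpert f
  have hmin1 : min ‖G f‖ ‖H f‖ ≤ ‖G f‖ := min_le_left _ _
  have hmin2 : min ‖G f‖ ‖H f‖ ≤ ‖H f‖ := min_le_right _ _
  have d1 : ‖G f‖ - ‖H f‖ ≤ ‖G f - H f‖ := by
    have := norm_sub_norm_le (G f) (H f); linarith [le_abs_self (‖G f‖ - ‖H f‖)]
  have d2 : ‖H f‖ - ‖G f‖ ≤ ‖G f - H f‖ := by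
    have := norm_sub_norm_le (H f) (G f); rwa [norm_sub_rev] at this
  have hl : 0 < 1 + lam := by linarith
  constructor
  · rw [div_mul_eq_mul_div, div_le_iff₀ hl]
    nlinarith [hlam.le, mul_le_mul_of_nonneg_left hmin2 hlam.le]
  · nlinarith [hlam.le, mul_le_mul_of_nonneg_left hmin1 hlam.le, norm_nonneg f]
end

section
/- Let X and Θ be real normed spaces, let G, H : X → Θ be maps, and let A, B, A', B' > 0. Assume that A‖f‖ ≤ ‖G f‖ ≤ B‖f‖ and A'‖f‖ ≤ ‖H f‖ ≤ B'‖f‖ for all f ∈ X. Then, with λ := max(1 + B'/A, 1 + B/A'), one has ‖G f − H f‖ ≤ λ·min(‖G f‖, ‖H f‖) for all f ∈ X. -/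
/-- Necessity direction of the stability theorem (single-seminorm instance):
two analysis maps `G`, `H` satisfying frame inequalities with bounds `A, B` and
`A', B'` respectively automatically satisfy the perturbation condition with
`λ = max(1 + B'/A, 1 + B/A')`. -/
theorem frame_stability_necessary
    {X Θ : Type*} [NormedAddCommGroup X] [NormedSpace ℝ X]
    [NormedAddCommGroup Θ] [NormedSpace ℝ Θ]
    (G H : X → Θ) (A B A' B' : ℝ)
    (hA : 0 < A) (hB : 0 < B) (hA' : 0 < A') (hB' : 0 < B')
    (hG : ∀ f : X, A * ‖f‖ ≤ ‖G f‖ ∧ ‖G f‖ ≤ B * ‖f‖)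
    (hH : ∀ f : X, A' * ‖f‖ ≤ ‖H f‖ ∧ ‖H f‖ ≤ B' * ‖f‖) :
    ∀ f : X, ‖G f - H f‖ ≤ max (1 + B' / A) (1 + B / A') * min ‖G f‖ ‖H f‖ := by
  intro f
  obtain ⟨hG1, hG2⟩ := hG f
  obtain ⟨hH1, hH2⟩ := hH f
  have htri : ‖G f - H f‖ ≤ ‖G f‖ + ‖H f‖ := norm_sub_le _ _
  have h1 : ‖H f‖ ≤ (B' / A) * ‖G f‖ := by
    calc ‖H f‖ ≤ B' * ‖f‖ := hH2
    _ = (B' / A) * (A * ‖f‖) := by field_simp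
    _ ≤ (B' / A) * ‖G f‖ := by
        exact mul_le_mul_of_nonneg_left hG1 (by positivity)
  have h2 : ‖G f‖ ≤ (B / A') * ‖H f‖ := by
    calc ‖G f‖ ≤ B * ‖f‖ := hG2
    _ = (B / A') * (A' * ‖f‖) := by field_simp
    _ ≤ (B / A') * ‖H f‖ := by
        exact mul_le_mul_of_nonneg_left hH1 (by positivity)
  rcases min_cases ‖G f‖ ‖H f‖ with ⟨hmin, hle⟩ | ⟨hmin, hle⟩
  · rw [hmin]
    calc ‖G f - H f‖ ≤ ‖G f‖ + ‖H f‖ := htri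
    _ ≤ ‖G f‖ + (B' / A) * ‖G f‖ := by linarith
    _ = (1 + B' / A) * ‖G f‖ := by ring
    _ ≤ max (1 + B' / A) (1 + B / A') * ‖G f‖ :=
        mul_le_mul_of_nonneg_right (le_max_left _ _) (norm_nonneg _)
  · rw [hmin]
    calc ‖G f - H f‖ ≤ ‖G f‖ + ‖H f‖ := htri
    _ ≤ (B / A') * ‖H f‖ + ‖H f‖ := by linarith
    _ = (1 + B / A') * ‖H f‖ := by ring
    _ ≤ max (1 + B' / A) (1 + B / A') * ‖H f‖ :=
        mul_le_mul_of_nonneg_right (le_max_right _ _) (norm_nonneg _)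
end

section
/- Let X be a nontrivial real Banach space, let 1 ≤ p < ∞, and let (g_n)_{n∈ℕ}, (h_n)_{n∈ℕ} be sequences of continuous linear functionals on X. Assume: (i) for every f ∈ X the sequence (g_n(f))_n lies in ℓ^p(ℕ) with (∑_n |g_n(f)|^p)^{1/p} ≤ B‖f‖ for some B > 0; (ii) there is a bounded linear operator S : ℓ^p(ℕ) → X with S((g_n(f))_n) = f for all f ∈ X; (iii) for every f ∈ X the sequence (h_n(f))_n lies in ℓ^p(ℕ); (iv) (α_n)_n and (β_n)_n are sequences of positive reals with 0 < a ≤ α_n ≤ a' and 0 < b ≤ β_n ≤ b' for all n; (v) λ, μ ∈ [0, 1) and γ ≥ 0 satisfy ‖S‖·γ < (1 − λ)·a; and (vi) for every f ∈ X, (∑_n |α_n g_n(f) − β_n h_n(f)|^p)^{1/p} ≤ λ·(∑_n |α_n g_n(f)|^p)^{1/p} + μ·(∑_n |β_n h_n(f)|^p)^{1/p} + γ‖f‖. Then for every f ∈ X one has (((1 − λ)·‖S‖⁻¹·a − γ)/((1 + μ)·b'))·‖f‖ ≤ (∑_n |h_n(f)|^p)^{1/p} ≤ (((1 + λ)·B·a'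 + γ)/((1 − μ)·b))·‖f‖. -/
/-- Scaled domination helper for `ℓ^p`-type sums. -/
lemma wfp_scale_le {p : ℝ} (hp : 1 ≤ p) {x y : ℕ → ℝ} {c : ℝ} (hc : 0 ≤ c)
    (hx : Summable fun n => |x n| ^ p) (hle : ∀ n, |y n| ≤ c * |x n|) :
    Summable (fun n => |y n| ^ p) ∧
      (∑' n, |y n| ^ p) ^ (1 / p) ≤ c * (∑' n, |x n| ^ p) ^ (1 / p) := by
  have hp0 : 0 < p := lt_of_lt_of_le one_pos hp
  have hpt : ∀ n, |y n| ^ p ≤ c ^ p * |x n| ^ p := fun n => by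
    rw [← Real.mul_rpow hc (abs_nonneg _)]
    exact Real.rpow_le_rpow (abs_nonneg _) (hle n) hp0.le
  have hsum : Summable fun n => c ^ p * |x n| ^ p := hx.mul_left _
  have hy : Summable fun n => |y n| ^ p :=
    Summable.of_nonneg_of_le (fun n => Real.rpow_nonneg (abs_nonneg _) p) hpt hsum
  refine ⟨hy, ?_⟩
  have h1 : (∑' n, |y n| ^ p) ≤ c ^ p * (∑' n, |x n| ^ p) := by
    rw [← tsum_mul_left]
    exact Summable.tsum_le_tsum hpt hy hsum
  have h2 := Real.rpow_le_rpow (tsum_nonneg fun n => Real.rpow_nonneg (abs_nonneg _) p) h1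
    (by positivity : (0:ℝ) ≤ 1 / p)
  have hcp : (c ^ p) ^ (1 / p) = c := by
    rw [← Real.rpow_mul hc, mul_one_div, div_self hp0.ne', Real.rpow_one]
  rwa [Real.mul_rpow (Real.rpow_nonneg hc p)
      (tsum_nonneg fun n => Real.rpow_nonneg (abs_nonneg _) p), hcp] at h2

/-- Lower scaled comparison helper. -/
lemma wfp_le_scale {p : ℝ} (hp : 1 ≤ p) {x y : ℕ → ℝ} {c : ℝ} (hc : 0 ≤ c)
    (hx : Summable fun n => |x n| ^ p) (hy : Summable fun n => |y n| ^ p)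
    (hle : ∀ n, c * |x n| ≤ |y n|) :
    c * (∑' n, |x n| ^ p) ^ (1 / p) ≤ (∑' n, |y n| ^ p) ^ (1 / p) := by
  have hp0 : 0 < p := lt_of_lt_of_le one_pos hp
  have hpt : ∀ n, c ^ p * |x n| ^ p ≤ |y n| ^ p := fun n => by
    rw [← Real.mul_rpow hc (abs_nonneg _)]
    exact Real.rpow_le_rpow (mul_nonneg hc (abs_nonneg _)) (hle n) hp0.le
  have h1 : c ^ p * (∑' n, |x n| ^ p) ≤ (∑' n, |y n| ^ p) := by
    rw [← tsum_mul_left]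
    exact Summable.tsum_le_tsum hpt (hx.mul_left _) hy
  have h2 := Real.rpow_le_rpow
    (mul_nonneg (Real.rpow_nonneg hc p) (tsum_nonneg fun n => Real.rpow_nonneg (abs_nonneg _) p))
    h1 (by positivity : (0:ℝ) ≤ 1 / p)
  have hcp : (c ^ p) ^ (1 / p) = c := by
    rw [← Real.rpow_mul hc, mul_one_div, div_self hp0.ne', Real.rpow_one]
  rwa [Real.mul_rpow (Real.rpow_nonneg hc p)
      (tsum_nonneg fun n => Real.rpow_nonneg (abs_nonneg _) p), hcp] at h2

/-- Minkowski inequality with absolute values, tsum version. -/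
lemma wfp_minkowski {p : ℝ} (hp : 1 ≤ p) {x y : ℕ → ℝ}
    (hx : Summable fun n => |x n| ^ p) (hy : Summable fun n => |y n| ^ p) :
    Summable (fun n => |x n + y n| ^ p) ∧
      (∑' n, |x n + y n| ^ p) ^ (1 / p) ≤
        (∑' n, |x n| ^ p) ^ (1 / p) + (∑' n, |y n| ^ p) ^ (1 / p) := by
  have hp0 : 0 < p := lt_of_lt_of_le one_pos hp
  obtain ⟨hs, hle⟩ := Real.Lp_add_le_tsum_of_nonneg hp
    (fun n => abs_nonneg (x n)) (fun n => abs_nonneg (y n)) hx hy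
  have hpt : ∀ n, |x n + y n| ^ p ≤ (|x n| + |y n|) ^ p := fun n =>
    Real.rpow_le_rpow (abs_nonneg _) (abs_add_le _ _) hp0.le
  have hsxy : Summable fun n => |x n + y n| ^ p :=
    Summable.of_nonneg_of_le (fun n => Real.rpow_nonneg (abs_nonneg _) p) hpt hs
  refine ⟨hsxy, le_trans ?_ hle⟩
  exact Real.rpow_le_rpow (tsum_nonneg fun n => Real.rpow_nonneg (abs_nonneg _) p)
    (Summable.tsum_le_tsum hpt hsxy hs) (by positivity)

set_option maxHeartbeats 1000000 in
/-- Weighted perturbation theorem for Banach frames (single-seminorm instance of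
the Fréchet frame theorem): the perturbed family `(h_n)` satisfies the frame
inequalities with the stated bounds. -/
theorem weighted_frame_perturbation
    {X : Type*} [NormedAddCommGroup X] [NormedSpace ℝ X] [CompleteSpace X]
    [Nontrivial X]
    (p : ℝ) (hp : 1 ≤ p) [Fact (1 ≤ ENNReal.ofReal p)]
    (g h : ℕ → X →L[ℝ] ℝ) (B : ℝ) (hB : 0 < B)
    (hg : ∀ f : X, Summable (fun n => |g n f| ^ p) ∧
      (∑' n, |g n f| ^ p) ^ (1 / p) ≤ B * ‖f‖)
    (hgmem : ∀ f : X, Memℓp (fun n => g n f) (ENNReal.ofReal p))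
    (S : lp (fun _ : ℕ => ℝ) (ENNReal.ofReal p) →L[ℝ] X)
    (hS : ∀ f : X, S ⟨fun n => g n f, hgmem f⟩ = f)
    (hh : ∀ f : X, Summable (fun n => |h n f| ^ p))
    (α β : ℕ → ℝ) (a a' b b' : ℝ) (ha : 0 < a) (hb : 0 < b)
    (hα : ∀ n, a ≤ α n ∧ α n ≤ a') (hβ : ∀ n, b ≤ β n ∧ β n ≤ b')
    (lam mu γ : ℝ) (hlam : 0 ≤ lam) (hlam1 : lam < 1)
    (hmu : 0 ≤ mu) (hmu1 : mu < 1) (hγ : 0 ≤ γ)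
    (hsmall : ‖S‖ * γ < (1 - lam) * a)
    (hpert : ∀ f : X,
      (∑' n, |α n * g n f - β n * h n f| ^ p) ^ (1 / p) ≤
        lam * (∑' n, |α n * g n f| ^ p) ^ (1 / p) +
        mu * (∑' n, |β n * h n f| ^ p) ^ (1 / p) + γ * ‖f‖) :
    ∀ f : X,
      ((1 - lam) * ‖S‖⁻¹ * a - γ) / ((1 + mu) * b') * ‖f‖ ≤
        (∑' n, |h n f| ^ p) ^ (1 / p) ∧
      (∑' n, |h n f| ^ p) ^ (1 / p) ≤ ((1 + lam) * B * a' + γ) / ((1 - mu) * b) * ‖f‖ := by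
  have hp0 : 0 < p := lt_of_lt_of_le one_pos hp
  have ha' : 0 < a' := lt_of_lt_of_le ha (le_trans (hα 0).1 (hα 0).2)
  have hb' : 0 < b' := lt_of_lt_of_le hb (le_trans (hβ 0).1 (hβ 0).2)
  -- ‖S‖ > 0
  have hSnorm : ∀ f : X, ‖f‖ ≤ ‖S‖ * (∑' n, |g n f| ^ p) ^ (1 / p) := by
    intro f
    have hx : ‖(⟨fun n => g n f, hgmem f⟩ : lp (fun _ : ℕ => ℝ) (ENNReal.ofReal p))‖
        = (∑' n, |g n f| ^ p) ^ (1 / p) := by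
      rw [lp.norm_eq_tsum_rpow (by rw [ENNReal.toReal_ofReal hp0.le]; exact hp0)]
      simp [ENNReal.toReal_ofReal hp0.le, Real.norm_eq_abs]
    calc ‖f‖ = ‖S ⟨fun n => g n f, hgmem f⟩‖ := by rw [hS f]
      _ ≤ ‖S‖ * ‖(⟨fun n => g n f, hgmem f⟩ : lp (fun _ : ℕ => ℝ) (ENNReal.ofReal p))‖ :=
          S.le_opNorm _
      _ = ‖S‖ * (∑' n, |g n f| ^ p) ^ (1 / p) := by rw [hx]
  have hSpos : 0 < ‖S‖ := by
    obtain ⟨f0, hf0⟩ := exists_ne (0 : X)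
    have h1 := hSnorm f0
    have h2 : 0 < ‖f0‖ := norm_pos_iff.mpr hf0
    have h3 : 0 ≤ (∑' n, |g n f0| ^ p) ^ (1 / p) := Real.rpow_nonneg
      (tsum_nonneg fun n => Real.rpow_nonneg (abs_nonneg _) p) _
    by_contra hc
    push_neg at hc
    nlinarith
  intro f
  set G := (∑' n, |g n f| ^ p) ^ (1 / p) with hGdef
  set H := (∑' n, |h n f| ^ p) ^ (1 / p) with hHdef
  have sg := (hg f).1
  have sh := hh f
  have hGnn : 0 ≤ G := Real.rpow_nonneg (tsum_nonneg fun n => by positivity) _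
  have hHnn : 0 ≤ H := Real.rpow_nonneg (tsum_nonneg fun n => by positivity) _
  -- weighted sequences
  have hαabs : ∀ n, |α n * g n f| ≤ a' * |g n f| := fun n => by
    rw [abs_mul, abs_of_pos (lt_of_lt_of_le ha (hα n).1)]
    exact mul_le_mul_of_nonneg_right (hα n).2 (abs_nonneg _)
  have hβabs : ∀ n, |β n * h n f| ≤ b' * |h n f| := fun n => by
    rw [abs_mul, abs_of_pos (lt_of_lt_of_le hb (hβ n).1)]
    exact mul_le_mul_of_nonneg_right (hβ n).2 (abs_nonneg _)
  obtain ⟨sαg, hαGle⟩ := wfp_scale_le hp ha'.le sg hαabs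
  obtain ⟨sβh, hβHle⟩ := wfp_scale_le hp hb'.le sh hβabs
  set αG := (∑' n, |α n * g n f| ^ p) ^ (1 / p) with hαGdef
  set βH := (∑' n, |β n * h n f| ^ p) ^ (1 / p) with hβHdef
  have hαGnn : 0 ≤ αG := Real.rpow_nonneg (tsum_nonneg fun n => by positivity) _
  have hβHnn : 0 ≤ βH := Real.rpow_nonneg (tsum_nonneg fun n => by positivity) _
  -- lower weighted bounds
  have haG : a * G ≤ αG := wfp_le_scale hp ha.le sg sαg (fun n => by
    rw [abs_mul, abs_of_pos (lt_of_lt_of_le ha (hα n).1)]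
    exact mul_le_mul_of_nonneg_right (hα n).1 (abs_nonneg _))
  have hbH : b * H ≤ βH := wfp_le_scale hp hb.le sh sβh (fun n => by
    rw [abs_mul, abs_of_pos (lt_of_lt_of_le hb (hβ n).1)]
    exact mul_le_mul_of_nonneg_right (hβ n).1 (abs_nonneg _))
  -- difference sequence
  have sβhneg : Summable fun n => |(-(β n * h n f))| ^ p := by
    simpa using sβh
  obtain ⟨sD, _⟩ := wfp_minkowski hp sαg sβhneg
  have sD' : Summable fun n => |α n * g n f - β n * h n f| ^ p := by
    simpa [sub_eq_add_neg] using sD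
  set D := (∑' n, |α n * g n f - β n * h n f| ^ p) ^ (1 / p) with hDdef
  have hDnn : 0 ≤ D := Real.rpow_nonneg (tsum_nonneg fun n => by positivity) _
  have hD := hpert f
  -- triangle: βH ≤ αG + D  (β h = α g + (β h - α g))
  have htri1 : βH ≤ αG + D := by
    have sD'' : Summable fun n => |β n * h n f - α n * g n f| ^ p := by
      have : ∀ n, |β n * h n f - α n * g n f| = |α n * g n f - β n * h n f| := fun n =>
        abs_sub_comm _ _
      simpa [this] using sD'
    obtain ⟨_, hle⟩ := wfp_minkowski hp sαg sD''
    have heq : (∑' n, |α n * g n f + (β n * h n f - α n * g n f)| ^ p) =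
        ∑' n, |β n * h n f| ^ p := tsum_congr fun n => by
      have : α n * g n f + (β n * h n f - α n * g n f) = β n * h n f := by ring
      rw [this]
    have heq2 : (∑' n, |β n * h n f - α n * g n f| ^ p) =
        ∑' n, |α n * g n f - β n * h n f| ^ p := tsum_congr fun n => by rw [abs_sub_comm]
    rw [heq, heq2] at hle
    exact hle
  -- triangle: αG ≤ βH + D  (α g = β h + (α g - β h))
  have htri2 : αG ≤ βH + D := by
    obtain ⟨_, hle⟩ := wfp_minkowski hp sβh sD'
    have heq : (∑' n, |β n * h n f + (α n * g n f - β n * h n f)| ^ p) =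
        ∑' n, |α n * g n f| ^ p := tsum_congr fun n => by
      have : β n * h n f + (α n * g n f - β n * h n f) = α n * g n f := by ring
      rw [this]
    rw [heq] at hle
    exact hle
  have hGB : G ≤ B * ‖f‖ := (hg f).2
  have hfG : ‖f‖ ≤ ‖S‖ * G := hSnorm f
  have hfnn : 0 ≤ ‖f‖ := norm_nonneg f
  have hD' : D ≤ lam * αG + mu * βH + γ * ‖f‖ := hD
  have hαGle' : αG ≤ a' * G := hαGle
  have hβHle' : βH ≤ b' * H := hβHle
  have hSinv : ‖S‖⁻¹ * ‖f‖ ≤ G := by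
    rw [inv_mul_le_iff₀ hSpos]; exact hfG
  clear_value G H αG βH D
  clear hGdef hHdef hαGdef hβHdef hDdef
  set nS := ‖S‖ with hnSdef
  set nf := ‖f‖ with hnfdef
  clear_value nS nf
  clear hnSdef hnfdef hD hαGle hβHle sg sh sαg sβh sD sD' sβhneg hpert hg hS hSnorm hgmem hh hαabs hβabs
  constructor
  · -- lower bound
    rw [div_mul_eq_mul_div, div_le_iff₀ (by nlinarith : (0:ℝ) < (1 + mu) * b')]
    nlinarith [mul_le_mul_of_nonneg_left haG (by linarith : (0:ℝ) ≤ 1 - lam),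
      mul_le_mul_of_nonneg_left hSinv (mul_nonneg (by linarith : (0:ℝ) ≤ 1 - lam) ha.le),
      mul_le_mul_of_nonneg_left hβHle' (by linarith : (0:ℝ) ≤ 1 + mu),
      mul_nonneg hlam hαGnn, mul_nonneg hmu hβHnn]
  · -- upper bound
    rw [div_mul_eq_mul_div, le_div_iff₀ (by nlinarith : (0:ℝ) < (1 - mu) * b)]
    nlinarith [mul_le_mul_of_nonneg_left hbH (by linarith : (0:ℝ) ≤ 1 - mu),
      mul_le_mul_of_nonneg_left hαGle' (by linarith : (0:ℝ) ≤ 1 + lam),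
      mul_le_mul_of_nonneg_left hGB (mul_nonneg (by linarith : (0:ℝ) ≤ 1 + lam) ha'.le),
      mul_nonneg hlam hαGnn, mul_nonneg hmu hβHnn]
end

section
/- Let X and Θ be real Banach spaces, let G : X → Θ, S : Θ → X and V : Θ → X be bounded linear operators, and let A, B > 0 with A‖f‖ ≤ ‖G f‖ ≤ B‖f‖ for all f ∈ X and V(G f) = f for all f ∈ X. Let λ₁, λ₂, μ ≥ 0 satisfy λ₂ < 1 and λ₁ + μ·B < 1, and assume ‖S c − V c‖ ≤ λ₁‖V c‖ + λ₂‖S c‖ + μ‖c‖ for all c ∈ Θ. Then the operator L := S ∘ G : X → X is bijective, S(G(L⁻¹ f)) = f for all f ∈ X, and for all f ∈ X one has (A·(1 − λ₂)/(1 + λ₁ + μB))·‖f‖ ≤ ‖G(L⁻¹ f)‖ ≤ (B·(1 + λ₂)/(1 − (λ₁ + μB)))·‖f‖. -/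
set_option maxHeartbeats 2000000 in
lemma invertible_of_perturb {E : Type*} [NormedAddCommGroup E] [NormedSpace ℝ E]
    [CompleteSpace E] (L : E →L[ℝ] E) (k l2 : ℝ) (hk0 : 0 ≤ k) (hl20 : 0 ≤ l2)
    (hk : k < 1) (hl2 : l2 < 1)
    (h : ∀ f, ‖L f - f‖ ≤ k * ‖f‖ + l2 * ‖L f‖) : IsUnit L := by
  rcases subsingleton_or_nontrivial E with hE | hE
  · have : L = 1 := Subsingleton.elim _ _
    rw [this]; exact isUnit_one
  set m : ℝ := max k l2 with hm_def
  have hm : m < 1 := max_lt hk hl2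
  have hm0 : 0 ≤ m := le_trans hk0 (le_max_left _ _)
  set c : ℝ := (1 - m) / (1 + l2) with hc_def
  have hc : 0 < c := div_pos (by linarith) (by linarith)
  set T : ℝ → (E →L[ℝ] E) := fun t => (1 - t) • (1 : E →L[ℝ] E) + t • L with hT_def
  have hTapp : ∀ t f, T t f = (1 - t) • f + t • L f := by
    intro t f
    simp [hT_def]
  have hlow : ∀ t, 0 ≤ t → t ≤ 1 → ∀ f, c * ‖f‖ ≤ ‖T t f‖ := by
    intro t ht0 ht1 f
    have h1 : T t f - f = t • (L f - f) := by
      rw [hTapp, smul_sub, sub_smul, one_smul]; abel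
    have h2 : ‖T t f - f‖ = t * ‖L f - f‖ := by
      rw [h1, norm_smul, Real.norm_eq_abs, abs_of_nonneg ht0]
    have h3 : t • L f = T t f - (1 - t) • f := by rw [hTapp]; abel
    have h4 : t * ‖L f‖ ≤ ‖T t f‖ + (1 - t) * ‖f‖ := by
      calc t * ‖L f‖ = ‖t • L f‖ := by
            rw [norm_smul, Real.norm_eq_abs, abs_of_nonneg ht0]
        _ = ‖T t f - (1 - t) • f‖ := by rw [h3]
        _ ≤ ‖T t f‖ + ‖(1 - t) • f‖ := norm_sub_le _ _
        _ = ‖T t f‖ + (1 - t) * ‖f‖ := by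
            rw [norm_smul, Real.norm_eq_abs, abs_of_nonneg (by linarith)]
    have h5 : ‖T t f - f‖ ≤ (t * k + (1 - t) * l2) * ‖f‖ + l2 * ‖T t f‖ := by
      have := h f
      have hkm : t * ‖L f - f‖ ≤ t * (k * ‖f‖ + l2 * ‖L f‖) :=
        mul_le_mul_of_nonneg_left this ht0
      have hl2t : l2 * (t * ‖L f‖) ≤ l2 * (‖T t f‖ + (1 - t) * ‖f‖) :=
        mul_le_mul_of_nonneg_left h4 hl20
      rw [h2]; nlinarith [norm_nonneg f, norm_nonneg (T t f)]
    have h6 : t * k + (1 - t) * l2 ≤ m := by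
      have : t * k ≤ t * m := mul_le_mul_of_nonneg_left (le_max_left _ _) ht0
      have : (1 - t) * l2 ≤ (1 - t) * m :=
        mul_le_mul_of_nonneg_left (le_max_right _ _) (by linarith)
      nlinarith [mul_le_mul_of_nonneg_left (le_max_left k l2) ht0]
    have h7 : ‖f‖ ≤ ‖T t f‖ + ‖T t f - f‖ := by
      simpa [sub_sub_cancel] using norm_sub_le (T t f) (T t f - f)
    have h8 : (1 - m) * ‖f‖ ≤ (1 + l2) * ‖T t f‖ := by
      nlinarith [norm_nonneg f, norm_nonneg (T t f), h5, h6, h7]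
    rw [hc_def, div_mul_eq_mul_div, div_le_iff₀ (by linarith : (0:ℝ) < 1 + l2)]
    nlinarith [h8]
  -- step lemma
  have hinvnorm : ∀ (u : (E →L[ℝ] E)ˣ), ∀ s, 0 ≤ s → s ≤ 1 → (u : E →L[ℝ] E) = T s →
      c ≤ ‖((u⁻¹ : (E →L[ℝ] E)ˣ) : E →L[ℝ] E)‖⁻¹ := by
    intro u s hs0 hs1 hu
    have hb : ∀ y : E, ‖((u⁻¹ : (E →L[ℝ] E)ˣ) : E →L[ℝ] E) y‖ ≤ c⁻¹ * ‖y‖ := by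
      intro y
      have h1 : T s (((u⁻¹ : (E →L[ℝ] E)ˣ) : E →L[ℝ] E) y) = y := by
        rw [← hu]
        have : (u : E →L[ℝ] E) (((u⁻¹ : (E →L[ℝ] E)ˣ) : E →L[ℝ] E) y)
            = ((u * u⁻¹ : (E →L[ℝ] E)ˣ) : E →L[ℝ] E) y := by
          rw [Units.val_mul, ContinuousLinearMap.mul_apply]
        rw [this, mul_inv_cancel]
        simp
      have := hlow s hs0 hs1 (((u⁻¹ : (E →L[ℝ] E)ˣ) : E →L[ℝ] E) y)
      rw [h1] at this
      rw [inv_mul_eq_div, le_div_iff₀ hc]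
      linarith
    have hnorm : ‖((u⁻¹ : (E →L[ℝ] E)ˣ) : E →L[ℝ] E)‖ ≤ c⁻¹ :=
      ContinuousLinearMap.opNorm_le_bound _ (by positivity) hb
    have hpos : 0 < ‖((u⁻¹ : (E →L[ℝ] E)ˣ) : E →L[ℝ] E)‖ := Units.norm_pos _
    rw [le_inv_comm₀ hc hpos]
    exact hnorm
  set δ : ℝ := c / (‖L - 1‖ + 1) with hδ_def
  have hδ : 0 < δ := div_pos hc (by positivity)
  have hδc : δ * ‖L - 1‖ < c := by
    rw [hδ_def, div_mul_eq_mul_div, div_lt_iff₀ (by positivity)]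
    nlinarith [norm_nonneg (L - 1), hc]
  have main : ∀ n : ℕ, ∀ t, 0 ≤ t → t ≤ 1 → t ≤ n * δ → IsUnit (T t) := by
    intro n
    induction n with
    | zero =>
      intro t ht0 ht1 htn
      have : t = 0 := le_antisymm (by simpa using htn) ht0
      subst this
      have : T 0 = 1 := by simp [hT_def]
      rw [this]; exact isUnit_one
    | succ n ih =>
      intro t ht0 ht1 htn
      set s : ℝ := max (t - δ) 0 with hs_def
      have hs0 : 0 ≤ s := le_max_right _ _
      have hs1 : s ≤ 1 := max_le (by linarith) (by linarith)
      have hsn : s ≤ n * δ := by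
        apply max_le
        · push_cast at htn ⊢; linarith
        · positivity
      have hts : 0 ≤ t - s ∧ t - s ≤ δ := by
        constructor
        · have : t - δ ≤ s := le_max_left _ _
          rcases le_or_gt 0 (t - δ) with h' | h'
          · have : s = t - δ := by rw [hs_def, max_eq_left h']
            rw [this]; linarith
          · have : s = 0 := by rw [hs_def, max_eq_right (by linarith)]
            rw [this]; linarith
        · rcases le_or_gt 0 (t - δ) with h' | h'
          · have : s = t - δ := by rw [hs_def, max_eq_left h']
            rw [this]; linarith
          · have : s = 0 := by rw [hs_def, max_eq_right (by linarith)]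
            rw [this]; linarith
      obtain ⟨u, hu⟩ := ih s hs0 hs1 hsn
      have hdiff : T t - T s = (t - s) • (L - 1) := by
        rw [hT_def]
        simp only [smul_sub, sub_smul]
        abel
      have hnd : ‖T t - T s‖ < c := by
        rw [hdiff]
        calc ‖(t - s) • (L - 1)‖ ≤ ‖(t - s)‖ * ‖L - 1‖ := ContinuousLinearMap.opNorm_smul_le _ _
          _ = (t - s) * ‖L - 1‖ := by
              rw [Real.norm_eq_abs, abs_of_nonneg hts.1]
          _ ≤ δ * ‖L - 1‖ := mul_le_mul_of_nonneg_right hts.2 (norm_nonneg _)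
          _ < c := hδc
      have hub := hinvnorm u s hs0 hs1 hu
      have : ‖T t - (u : E →L[ℝ] E)‖ < ‖((u⁻¹ : (E →L[ℝ] E)ˣ) : E →L[ℝ] E)‖⁻¹ := by
        rw [hu]; exact lt_of_lt_of_le hnd hub
      exact (u.ofNearby (T t) this).isUnit
  have hT1 : T 1 = L := by simp [hT_def]
  obtain ⟨n, hn⟩ := exists_nat_gt (1 / δ)
  have : IsUnit (T 1) := by
    apply main n 1 zero_le_one le_rfl
    nlinarith [mul_lt_mul_of_pos_right hn hδ, one_div_mul_cancel hδ.ne']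
  rwa [hT1] at this

/-- Perturbation of the reconstruction operator (single-seminorm instance):
if `G` is the analysis operator of a frame with bounds `A, B` and reconstruction
operator `V`, and `S` is a perturbed reconstruction operator, then `L := S ∘ G`
is bijective and the family with analysis operator `G ∘ L⁻¹` is a frame with
reconstruction operator `S` and the stated bounds. -/
theorem reconstruction_perturbation
    {X Θ : Type*} [NormedAddCommGroup X] [NormedSpace ℝ X] [CompleteSpace X]
    [NormedAddCommGroup Θ] [NormedSpace ℝ Θ] [CompleteSpace Θ]
    (G : X →L[ℝ] Θ) (S V : Θ →L[ℝ] X) (A B : ℝ) (hA : 0 < A) (hB : 0 < B)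
    (hG : ∀ f : X, A * ‖f‖ ≤ ‖G f‖ ∧ ‖G f‖ ≤ B * ‖f‖)
    (hV : ∀ f : X, V (G f) = f)
    (lam1 lam2 mu : ℝ) (hlam1 : 0 ≤ lam1) (hlam2 : 0 ≤ lam2) (hmu : 0 ≤ mu)
    (hlam2' : lam2 < 1) (hmain : lam1 + mu * B < 1)
    (hpert : ∀ c : Θ, ‖S c - V c‖ ≤ lam1 * ‖V c‖ + lam2 * ‖S c‖ + mu * ‖c‖) :
    Function.Bijective ⇑(S.comp G) ∧
    (∀ f : X, S (G (Function.invFun ⇑(S.comp G) f)) = f) ∧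
    ∀ f : X,
      A * (1 - lam2) / (1 + lam1 + mu * B) * ‖f‖ ≤
        ‖G (Function.invFun ⇑(S.comp G) f)‖ ∧
      ‖G (Function.invFun ⇑(S.comp G) f)‖ ≤
        B * (1 + lam2) / (1 - (lam1 + mu * B)) * ‖f‖ := by
  have hkB : 0 ≤ lam1 + mu * B := by positivity
  have hkey : ∀ f : X, ‖(S.comp G) f - f‖ ≤
      (lam1 + mu * B) * ‖f‖ + lam2 * ‖(S.comp G) f‖ := by
    intro f
    have h1 := hpert (G f)
    rw [hV f] at h1
    have h2 := (hG f).2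
    have h3 : (S.comp G) f = S (G f) := rfl
    rw [h3]
    nlinarith [mul_le_mul_of_nonneg_left h2 hmu]
  have hunit : IsUnit (S.comp G) :=
    invertible_of_perturb (S.comp G) (lam1 + mu * B) lam2 hkB hlam2 hmain hlam2' hkey
  obtain ⟨u, hu⟩ := hunit
  have hleft : Function.LeftInverse ⇑((u⁻¹ : (X →L[ℝ] X)ˣ) : X →L[ℝ] X) ⇑(S.comp G) := by
    intro x
    rw [← hu]
    have : ((u⁻¹ : (X →L[ℝ] X)ˣ) : X →L[ℝ] X) ((u : X →L[ℝ] X) x)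
        = ((u⁻¹ * u : (X →L[ℝ] X)ˣ) : X →L[ℝ] X) x := by
      rw [Units.val_mul, ContinuousLinearMap.mul_apply]
    rw [this, inv_mul_cancel]
    simp
  have hright : Function.RightInverse ⇑((u⁻¹ : (X →L[ℝ] X)ˣ) : X →L[ℝ] X) ⇑(S.comp G) := by
    intro x
    rw [← hu]
    have : (u : X →L[ℝ] X) (((u⁻¹ : (X →L[ℝ] X)ˣ) : X →L[ℝ] X) x)
        = ((u * u⁻¹ : (X →L[ℝ] X)ˣ) : X →L[ℝ] X) x := by
      rw [Units.val_mul, ContinuousLinearMap.mul_apply]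
    rw [this, mul_inv_cancel]
    simp
  have hbij : Function.Bijective ⇑(S.comp G) := ⟨hleft.injective, hright.surjective⟩
  have hinv : ∀ f : X, (S.comp G) (Function.invFun ⇑(S.comp G) f) = f :=
    fun f => Function.rightInverse_invFun hbij.2 f
  refine ⟨hbij, fun f => hinv f, fun f => ?_⟩
  set g : X := Function.invFun ⇑(S.comp G) f with hg_def
  have hg : (S.comp G) g = f := hinv f
  have hK := hkey g
  rw [hg] at hK
  have hGg1 := (hG g).1
  have hGg2 := (hG g).2
  have hfg : ‖g‖ ≤ ‖f‖ + ‖f - g‖ := by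
    simpa [sub_sub_cancel] using norm_sub_le f (f - g)
  have hgf : ‖f‖ ≤ ‖g‖ + ‖f - g‖ := by
    simpa [sub_sub_cancel] using norm_le_norm_add_norm_sub' f g
  have hup : (1 - (lam1 + mu * B)) * ‖g‖ ≤ (1 + lam2) * ‖f‖ := by nlinarith
  have hlo : (1 - lam2) * ‖f‖ ≤ (1 + (lam1 + mu * B)) * ‖g‖ := by nlinarith
  constructor
  · rw [div_mul_eq_mul_div, div_le_iff₀ (by linarith : (0:ℝ) < 1 + lam1 + mu * B)]
    nlinarith [norm_nonneg g, norm_nonneg f]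
  · rw [div_mul_eq_mul_div, le_div_iff₀ (by linarith : (0:ℝ) < 1 - (lam1 + mu * B))]
    nlinarith [norm_nonneg g, norm_nonneg f, norm_nonneg (G g)]
end

section
/- Let X and Θ be real Banach spaces, let U : X → Θ and S : Θ → X be bounded linear operators with S(U f) = f for all f ∈ X, and let V : X → Θ be a bounded linear operator. Let λ, μ ≥ 0 satisfy (λ‖U‖ + μ)·‖S‖ < 1, and assume ‖U f − V f‖ ≤ λ‖U f‖ + μ‖f‖ for all f ∈ X. Then: (i) ‖V f‖ ≤ ((1 + λ)‖U‖ + μ)·‖f‖ for all f ∈ X; (ii) the operator S ∘ V : X → X is bijective with ‖(S∘V)⁻¹‖ ≤ (1 − (λ‖U‖ + μ)‖S‖)⁻¹; (iii) the operator T := (S ∘ V)⁻¹ ∘ S : Θ → X satisfies T(V f) = f for all f ∈ X; and (iv) (1 − (λ‖U‖ + μ)‖S‖)·‖f‖ ≤ ‖S‖·‖V f‖ for all f ∈ X. -/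
/-- Perturbation of the analysis operator (single-seminorm instance): if `U` is
the analysis operator of a frame with reconstruction operator `S` (`S ∘ U = id`)
and `V` is close to `U`, then `V` satisfies the frame inequalities, `S ∘ V` is
invertible with `‖(S∘V)⁻¹‖ ≤ (1 − (λ‖U‖ + μ)‖S‖)⁻¹`, and `T := (S∘V)⁻¹ ∘ S`
reconstructs from `V`. -/
theorem analysis_perturbation
    {X Θ : Type*} [NormedAddCommGroup X] [NormedSpace ℝ X] [CompleteSpace X]
    [NormedAddCommGroup Θ] [NormedSpace ℝ Θ] [CompleteSpace Θ]
    (U V : X →L[ℝ] Θ) (S : Θ →L[ℝ] X)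
    (hSU : ∀ f : X, S (U f) = f)
    (lam mu : ℝ) (hlam : 0 ≤ lam) (hmu : 0 ≤ mu)
    (hsmall : (lam * ‖U‖ + mu) * ‖S‖ < 1)
    (hpert : ∀ f : X, ‖U f - V f‖ ≤ lam * ‖U f‖ + mu * ‖f‖) :
    (∀ f : X, ‖V f‖ ≤ ((1 + lam) * ‖U‖ + mu) * ‖f‖) ∧
    Function.Bijective ⇑(S.comp V) ∧
    (∃ W : X →L[ℝ] X, (∀ f : X, W (S (V f)) = f) ∧ (∀ f : X, S (V (W f)) = f) ∧
      ‖W‖ ≤ (1 - (lam * ‖U‖ + mu) * ‖S‖)⁻¹ ∧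
      ∀ f : X, (W.comp S) (V f) = f) ∧
    ∀ f : X, (1 - (lam * ‖U‖ + mu) * ‖S‖) * ‖f‖ ≤ ‖S‖ * ‖V f‖ := by
  set c : ℝ := (lam * ‖U‖ + mu) * ‖S‖ with hc
  have hc1 : c < 1 := hsmall
  have hUn : (0:ℝ) ≤ ‖U‖ := norm_nonneg _
  have hSn : (0:ℝ) ≤ ‖S‖ := norm_nonneg _
  have hc0 : 0 ≤ c := mul_nonneg (by positivity) hSn
  -- (i)
  have hi : ∀ f : X, ‖V f‖ ≤ ((1 + lam) * ‖U‖ + mu) * ‖f‖ := by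
    intro f
    have h1 : ‖V f‖ ≤ ‖U f‖ + ‖U f - V f‖ := by
      have := norm_sub_norm_le (U f) (V f)
      have := norm_le_insert (U f) (V f)
      calc ‖V f‖ = ‖U f - (U f - V f)‖ := by rw [sub_sub_cancel]
        _ ≤ ‖U f‖ + ‖U f - V f‖ := norm_sub_le _ _
    have h2 := hpert f
    have h3 : ‖U f‖ ≤ ‖U‖ * ‖f‖ := U.le_opNorm f
    nlinarith [norm_nonneg f]
  -- key estimate
  have key : ∀ f : X, ‖f - S (V f)‖ ≤ c * ‖f‖ := by
    intro f
    have h1 : f - S (V f) = S (U f - V f) := by rw [map_sub, hSU]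
    have h2 : ‖S (U f - V f)‖ ≤ ‖S‖ * ‖U f - V f‖ := S.le_opNorm _
    have h3 := hpert f
    have h4 : ‖U f‖ ≤ ‖U‖ * ‖f‖ := U.le_opNorm f
    rw [h1]
    calc ‖S (U f - V f)‖ ≤ ‖S‖ * (lam * ‖U f‖ + mu * ‖f‖) := by
          refine h2.trans ?_
          exact mul_le_mul_of_nonneg_left h3 hSn
      _ ≤ c * ‖f‖ := by rw [hc]; nlinarith [norm_nonneg f, mul_le_mul_of_nonneg_left h4 (mul_nonneg hSn hlam)]
  -- lower bound for S ∘ V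
  have key2 : ∀ f : X, (1 - c) * ‖f‖ ≤ ‖S (V f)‖ := by
    intro f
    have h1 : ‖f‖ ≤ ‖f - S (V f)‖ + ‖S (V f)‖ := by
      calc ‖f‖ = ‖(f - S (V f)) + S (V f)‖ := by rw [sub_add_cancel]
        _ ≤ _ := norm_add_le _ _
    have := key f
    nlinarith
  -- the unit
  set a : X →L[ℝ] X := 1 - S.comp V with ha
  have hanorm : ‖a‖ ≤ c := by
    refine ContinuousLinearMap.opNorm_le_bound _ hc0 fun f => ?_
    simpa [ha] using key f
  have ha1 : ‖a‖ < 1 := lt_of_le_of_lt hanorm hc1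
  set u : (X →L[ℝ] X)ˣ := Units.oneSub a ha1 with hu
  have huval : (u : X →L[ℝ] X) = S.comp V := by
    simp [hu, ha, Units.val_oneSub, sub_sub_cancel]
  set W : X →L[ℝ] X := ↑u⁻¹ with hW
  have hleft : ∀ f : X, W (S (V f)) = f := by
    intro f
    have : (W * (u : X →L[ℝ] X)) f = f := by
      rw [hW, u.inv_mul]; rfl
    rwa [ContinuousLinearMap.mul_apply, huval] at this
  have hright : ∀ f : X, S (V (W f)) = f := by
    intro f
    have : ((u : X →L[ℝ] X) * W) f = f := by
      rw [hW, u.mul_inv]; rfl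
    rwa [ContinuousLinearMap.mul_apply, huval] at this
  have hbij : Function.Bijective ⇑(S.comp V) := by
    constructor
    · exact Function.LeftInverse.injective (g := ⇑W) fun f => hleft f
    · exact Function.RightInverse.surjective (g := ⇑W) fun f => hright f
  have hWnorm : ‖W‖ ≤ (1 - c)⁻¹ := by
    have hpos : (0:ℝ) < 1 - c := by linarith
    refine ContinuousLinearMap.opNorm_le_bound _ (inv_nonneg.mpr hpos.le) fun g => ?_
    have h1 := key2 (W g)
    rw [hright g] at h1
    rw [inv_mul_eq_div, le_div_iff₀ hpos]
    linarith [h1]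
  refine ⟨hi, hbij, ⟨W, hleft, hright, hWnorm, fun f => hleft f⟩, fun f => ?_⟩
  calc (1 - c) * ‖f‖ ≤ ‖S (V f)‖ := key2 f
    _ ≤ ‖S‖ * ‖V f‖ := S.le_opNorm _
end
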